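/- arXiv:1807.07030 — 6 statements merged into one kernel-verified Lean document; each statement's English description precedes it below -/
import Mathlib

section
/- For every n ≥ 1, the path P_n on n vertices satisfies th_⌊Z⌋(P_n) = ⌈2√n − 1⌉. -/
open SimpleGraph

namespace ZFT

variable {V : Type*} {α : Type*} {β : Type*}

/-! ### Standard zero forcing (simultaneous propagation) -/

/-- One round of simultaneous standard zero forcing: a blue vertex forces its
unique white neighbor. -/
def zStep (G : SimpleGraph V) (S : Set V) : Set V :=
  S ∪ {w | ∃ u ∈ S, G.Adj u w ∧ ∀ x, G.Adj u x → x ∉ S → x = w}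

/-- `B` is a standard zero forcing set of `G`. -/
def IsZeroForcingSet (G : SimpleGraph V) (B : Set V) : Prop :=
  ∃ t : ℕ, (zStep G)^[t] B = Set.univ

/-- The standard propagation time `pt_Z(G;B)` (`⊤` if `B` is not a zero forcing set). -/
noncomputable def ptZ (G : SimpleGraph V) (B : Set V) : ℕ∞ :=
  sInf {n : ℕ∞ | ∃ t : ℕ, n = t ∧ (zStep G)^[t] B = Set.univ}

/-- The standard throttling number `th_Z(G;B) = |B| + pt_Z(G;B)`. -/
noncomputable def thZ (G : SimpleGraph V) (B : Set V) : ℕ∞ :=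
  (B.ncard : ℕ∞) + ptZ G B

/-- The standard throttling number `th_Z(G)`. -/
noncomputable def thZgraph (G : SimpleGraph V) : ℕ∞ :=
  sInf {n : ℕ∞ | ∃ B : Set V, IsZeroForcingSet G B ∧ n = thZ G B}

/-- The standard zero forcing number `Z(G)`. -/
noncomputable def Znum (G : SimpleGraph V) : ℕ :=
  sInf {k : ℕ | ∃ B : Set V, IsZeroForcingSet G B ∧ B.ncard = k}

/-- The standard propagation time `pt_Z(G)`, minimized over minimum zero forcing sets. -/
noncomputable def ptZgraph (G : SimpleGraph V) : ℕ∞ :=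
  sInf {n : ℕ∞ | ∃ B : Set V, IsZeroForcingSet G B ∧ B.ncard = Znum G ∧ n = ptZ G B}

/-! ### Sets of standard forces -/

/-- Validity of a single standard force `u → w` when `blue` is the blue set. -/
def zForceValid (G : SimpleGraph V) (blue : Set V) (u w : V) : Prop :=
  u ∈ blue ∧ w ∉ blue ∧ G.Adj u w ∧ ∀ x, G.Adj u x → x ∉ blue → x = w

/-- Validity of a chronological list of standard forces starting from a blue set. -/
def zValidList (G : SimpleGraph V) : Set V → List (V × V) → Prop
  | _, [] => True
  | blue, p :: L => zForceValid G blue p.1 p.2 ∧ zValidList G (insert p.2 blue) L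

/-- The blue set after performing all forces in a list, starting from `B`. -/
def endBlue (B : Set V) (L : List (V × V)) : Set V :=
  B ∪ {w | ∃ u, (u, w) ∈ L}

/-- The set of vertices that have performed a force in a list. -/
def endForced (L : List (V × V)) : Set V := {u | ∃ w, (u, w) ∈ L}

/-- `F` is a set of standard forces of `B` in `G` (recorded from a maximal
chronological list of forces). -/
def IsZForceSet (G : SimpleGraph V) (B : Set V) (F : Set (V × V)) : Prop :=
  ∃ L : List (V × V), zValidList G B L ∧
    (∀ u w, ¬ zForceValid G (endBlue B L) u w) ∧ F = {p | p ∈ L}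

/-- The set of blue vertices at time `t` when the forces of `F` are performed at the
earliest possible time steps, starting from `B` blue. -/
def zBlueAt (G : SimpleGraph V) (F : Set (V × V)) (B : Set V) : ℕ → Set V
  | 0 => B
  | t + 1 =>
      zBlueAt G F B t ∪ {w | ∃ v, (v, w) ∈ F ∧ zForceValid G (zBlueAt G F B t) v w}

/-- The standard propagation time `pt_Z(G;F)` of a set of forces `F` of `B`. -/
noncomputable def ptZofF (G : SimpleGraph V) (F : Set (V × V)) (B : Set V) : ℕ∞ :=
  sInf {n : ℕ∞ | ∃ t : ℕ, n = t ∧ zBlueAt G F B t = Set.univ}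

/-! ### `⌊Z⌋` (minor monotone floor) forcing -/

/-- Validity of a single `⌊Z⌋` force `u → w`: `u` is blue and has not yet forced, `w`
is white, and either `w` is the unique white neighbor of `u`, or all neighbors of `u`
are blue (a hop). -/
def zfForceValid (G : SimpleGraph V) (blue forced : Set V) (u w : V) : Prop :=
  u ∈ blue ∧ w ∉ blue ∧ u ∉ forced ∧
    ((G.Adj u w ∧ ∀ x, G.Adj u x → x ∉ blue → x = w) ∨ ∀ x, G.Adj u x → x ∈ blue)

/-- Validity of a chronological list of `⌊Z⌋` forces. -/
def zfValidList (G : SimpleGraph V) : Set V → Set V → List (V × V) → Prop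
  | _, _, [] => True
  | blue, forced, p :: L =>
      zfForceValid G blue forced p.1 p.2 ∧
        zfValidList G (insert p.2 blue) (insert p.1 forced) L

/-- `F` is a set of `⌊Z⌋` forces of `B` in `G` (recorded from a maximal chronological
list of `⌊Z⌋` forces starting with `B` blue). -/
def IsZFForceSet (G : SimpleGraph V) (B : Set V) (F : Set (V × V)) : Prop :=
  ∃ L : List (V × V), zfValidList G B ∅ L ∧
    (∀ u w, ¬ zfForceValid G (endBlue B L) (endForced L) u w) ∧ F = {p | p ∈ L}

/-- The set of blue vertices at time `t` when the `⌊Z⌋` forces of `F` are performed at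
the earliest possible time steps, starting from `B` blue. -/
def zfBlueAt (G : SimpleGraph V) (F : Set (V × V)) (B : Set V) : ℕ → Set V
  | 0 => B
  | t + 1 =>
      zfBlueAt G F B t ∪
        {w | ∃ v, (v, w) ∈ F ∧ v ∈ zfBlueAt G F B t ∧ w ∉ zfBlueAt G F B t ∧
          (∀ w', (v, w') ∈ F → w' ∈ zfBlueAt G F B t → w' ∈ B) ∧
          ((G.Adj v w ∧ ∀ x, G.Adj v x → x ∉ zfBlueAt G F B t → x = w) ∨
            ∀ x, G.Adj v x → x ∈ zfBlueAt G F B t)}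

/-- The `⌊Z⌋` propagation time `pt_⌊Z⌋(G;F)` of a set of `⌊Z⌋` forces `F` of `B`. -/
noncomputable def ptZFofF (G : SimpleGraph V) (F : Set (V × V)) (B : Set V) : ℕ∞ :=
  sInf {n : ℕ∞ | ∃ t : ℕ, n = t ∧ zfBlueAt G F B t = Set.univ}

/-- The `⌊Z⌋` propagation time `pt_⌊Z⌋(G;B)`, minimized over sets of `⌊Z⌋` forces of `B`. -/
noncomputable def ptZF (G : SimpleGraph V) (B : Set V) : ℕ∞ :=
  sInf {n : ℕ∞ | ∃ F : Set (V × V), IsZFForceSet G B F ∧ n = ptZFofF G F B}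

/-- The `⌊Z⌋` throttling number `th_⌊Z⌋(G;B) = |B| + pt_⌊Z⌋(G;B)`. -/
noncomputable def thZF (G : SimpleGraph V) (B : Set V) : ℕ∞ :=
  (B.ncard : ℕ∞) + ptZF G B

/-- The `⌊Z⌋` throttling number `th_⌊Z⌋(G)`, minimized over all `B ⊆ V(G)`. -/
noncomputable def thZFgraph (G : SimpleGraph V) : ℕ∞ :=
  sInf {n : ℕ∞ | ∃ B : Set V, n = thZF G B}

/-- `B` is a `⌊Z⌋` forcing set of `G`. -/
def IsZFForcingSet (G : SimpleGraph V) (B : Set V) : Prop :=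
  ∃ F : Set (V × V), IsZFForceSet G B F ∧ B ∪ {w | ∃ u, (u, w) ∈ F} = Set.univ

/-- The `⌊Z⌋` forcing number `⌊Z⌋(G)`. -/
noncomputable def ZFnum (G : SimpleGraph V) : ℕ :=
  sInf {k : ℕ | ∃ B : Set V, IsZFForcingSet G B ∧ B.ncard = k}

/-- The `⌊Z⌋` propagation time `pt_⌊Z⌋(G)`, minimized over minimum `⌊Z⌋` forcing sets. -/
noncomputable def ptZFgraph (G : SimpleGraph V) : ℕ∞ :=
  sInf {n : ℕ∞ | ∃ B : Set V, IsZFForcingSet G B ∧ B.ncard = ZFnum G ∧ n = ptZF G B}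

/-! ### Contractions, minors, and products -/

/-- The graph obtained from `H` by contracting (all) the edges in `C`: its vertices are
the connected components of the spanning subgraph of `H` with edge set `C ∩ E(H)`, and
two distinct components are adjacent iff `H` has an edge between them. -/
def contractEdges (H : SimpleGraph α) (C : Set (Sym2 α)) :
    SimpleGraph (SimpleGraph.fromEdgeSet C ⊓ H).ConnectedComponent where
  Adj c d := c ≠ d ∧ ∃ a b, H.Adj a b ∧
      (SimpleGraph.fromEdgeSet C ⊓ H).connectedComponentMk a = c ∧
      (SimpleGraph.fromEdgeSet C ⊓ H).connectedComponentMk b = d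
  symm := ⟨by
    rintro c d ⟨hcd, a, b, hab, ha, hb⟩
    exact ⟨hcd.symm, b, a, hab.symm, hb, ha⟩⟩
  loopless := ⟨fun c h => h.1 rfl⟩

/-- `G` is a minor of `H`: `G` is isomorphic to a subgraph of a graph obtained from an
induced subgraph of `H` by contracting a set of edges. -/
def IsMinor (G : SimpleGraph β) (H : SimpleGraph α) : Prop :=
  ∃ (s : Set α) (C : Set (Sym2 s))
    (G'' : SimpleGraph (SimpleGraph.fromEdgeSet C ⊓ H.induce s).ConnectedComponent),
      G'' ≤ contractEdges (H.induce s) C ∧ Nonempty (G ≃g G'')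

/-- The Cartesian product `K_a □ P_{b+1}`. -/
def prodKP (a b : ℕ) : SimpleGraph (Fin a × Fin (b + 1)) :=
  (⊤ : SimpleGraph (Fin a)) □ SimpleGraph.pathGraph (b + 1)

/-- The path edges of `K_a □ P_{b+1}` (edges within the copies of `P_{b+1}`). -/
def pathEdges (a b : ℕ) : Set (Sym2 (Fin a × Fin (b + 1))) :=
  {e | ∃ (i : Fin a) (j j' : Fin (b + 1)),
    (SimpleGraph.pathGraph (b + 1)).Adj j j' ∧ e = s((i, j), (i, j'))}

/-- The complete edges of `K_a □ P_{b+1}` (edges within the copies of `K_a`). -/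
def completeEdges (a b : ℕ) : Set (Sym2 (Fin a × Fin (b + 1))) :=
  {e | ∃ (i i' : Fin a) (j : Fin (b + 1)), i ≠ i' ∧ e = s((i, j), (i', j))}

/-- The star `K_{1,n-1}` on `n` vertices: vertex `0` is adjacent to all others. -/
def starGraph (n : ℕ) : SimpleGraph (Fin n) where
  Adj i j := i ≠ j ∧ ((i : ℕ) = 0 ∨ (j : ℕ) = 0)
  symm := ⟨by rintro i j ⟨h1, h2⟩; exact ⟨h1.symm, h2.symm⟩⟩
  loopless := ⟨fun i h => h.1 rfl⟩

/-- The independence number `α(G)`. -/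
noncomputable def indepNum (G : SimpleGraph V) : ℕ :=
  sSup {k : ℕ | ∃ s : Set V, (∀ a ∈ s, ∀ b ∈ s, a ≠ b → ¬ G.Adj a b) ∧ s.ncard = k}


/-! ### Auxiliary development for Statement 6 -/

section Stmt6Aux

/-! #### Arithmetic of the source function -/

/-- The source of the force targeting vertex `x` (for `k ≤ x`): within the block
`[k*(x/k), k*(x/k)+k)`, vertex `x` is forced by `k*(x/k) - 1 - x % k`. -/
def srcN (k x : ℕ) : ℕ := k * (x / k) - 1 - x % k

lemma srcN_key {k x : ℕ} (hk : 0 < k) (hx : k ≤ x) :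
    srcN k x + x % k + 1 = k * (x / k) ∧ x % k < k ∧ k ≤ k * (x / k) ∧
      k * (x / k) + x % k = x := by
  have h1 := Nat.div_add_mod x k
  have h2 : x % k < k := Nat.mod_lt _ hk
  have h3 : 1 ≤ x / k := (Nat.one_le_div_iff hk).2 hx
  have h4 : k * 1 ≤ k * (x / k) := Nat.mul_le_mul_left k h3
  unfold srcN
  omega

lemma srcN_lt {k x : ℕ} (hk : 0 < k) (hx : k ≤ x) : srcN k x < x := by
  obtain ⟨e1, e2, e3, e4⟩ := srcN_key hk hx; omega

lemma srcN_inj {k x y : ℕ} (hk : 0 < k) (hx : k ≤ x) (hy : k ≤ y)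
    (h : srcN k x = srcN k y) : x = y := by
  obtain ⟨e1, e2, e3, e4⟩ := srcN_key hk hx
  obtain ⟨f1, f2, f3, f4⟩ := srcN_key hk hy
  rcases lt_trichotomy (x / k) (y / k) with hlt | heq | hgt
  · have h5 : x / k + 1 ≤ y / k := hlt
    have h6 : k * (x / k + 1) ≤ k * (y / k) := Nat.mul_le_mul_left k h5
    have h7 : k * (x / k + 1) = k * (x / k) + k := by ring
    omega
  · have h8 : k * (x / k) = k * (y / k) := by rw [heq]
    omega
  · have h5 : y / k + 1 ≤ x / k := hgt
    have h6 : k * (y / k + 1) ≤ k * (x / k) := Nat.mul_le_mul_left k h5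
    have h7 : k * (y / k + 1) = k * (y / k) + k := by ring
    omega

/-! #### The explicit `⌊Z⌋` forcing scheme on `P_n` -/

variable {n k : ℕ}

/-- Natural number `x` as a vertex of `P_n`. -/
def fv (hn : 0 < n) (x : ℕ) : Fin n := ⟨x % n, Nat.mod_lt x hn⟩

lemma fv_val (hn : 0 < n) {x : ℕ} (hx : x < n) : ((fv hn x : Fin n) : ℕ) = x := by
  simp [fv, Nat.mod_eq_of_lt hx]

lemma fv_self (hn : 0 < n) (x : Fin n) : fv hn (x : ℕ) = x := by
  apply Fin.ext; exact fv_val hn x.isLt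

/-- The force with target `x`. -/
def pairU (hn : 0 < n) (k x : ℕ) : Fin n × Fin n := (fv hn (srcN k x), fv hn x)

/-- The chronological list of forces with targets `m, m+1, …, n-1`. -/
def LU (hn : 0 < n) (k m : ℕ) : List (Fin n × Fin n) :=
  (List.range (n - m)).map (fun i => pairU hn k (m + i))

/-- The set of forces used on `P_n`. -/
def FU (hn : 0 < n) (k : ℕ) : Set (Fin n × Fin n) := {p | p ∈ LU hn k k}

/-- The initial blue set: the first `k` vertices. -/
def BU (n k : ℕ) : Set (Fin n) := {x : Fin n | (x : ℕ) < k}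

lemma mem_FU (hn : 0 < n) (hk : 0 < k) (p : Fin n × Fin n) :
    p ∈ FU hn k ↔ k ≤ (p.2 : ℕ) ∧ (p.1 : ℕ) = srcN k (p.2 : ℕ) := by
  constructor
  · intro hp
    obtain ⟨i, hi, hpe⟩ := List.mem_map.1 hp
    have hi' : i < n - k := List.mem_range.1 hi
    have hx : k + i < n := by omega
    have hs : srcN k (k + i) < n := lt_trans (srcN_lt hk (by omega)) hx
    subst hpe
    simp only [pairU]
    refine ⟨?_, ?_⟩
    · rw [fv_val hn hx]; omega
    · rw [fv_val hn hx, fv_val hn hs]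
  · rintro ⟨h1, h2⟩
    refine List.mem_map.2 ⟨(p.2 : ℕ) - k, List.mem_range.2 (by have := p.2.isLt; omega), ?_⟩
    have hx : k + ((p.2 : ℕ) - k) = (p.2 : ℕ) := by omega
    rw [hx]
    have : fv hn (p.2 : ℕ) = p.2 := fv_self hn p.2
    unfold pairU
    rw [this]
    have hs : srcN k (p.2 : ℕ) < n := lt_trans (srcN_lt hk h1) p.2.isLt
    have : fv hn (srcN k (p.2 : ℕ)) = p.1 := by
      apply Fin.ext; rw [fv_val hn hs, h2]
    rw [this]

lemma ncard_BU (hkn : k ≤ n) : (BU n k).ncard = k := by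
  have himg : BU n k = (Fin.castLE hkn) '' Set.univ := by
    ext x
    simp only [BU, Set.mem_setOf_eq, Set.image_univ, Set.mem_range]
    constructor
    · intro h; exact ⟨⟨(x : ℕ), h⟩, by apply Fin.ext; simp⟩
    · rintro ⟨i, rfl⟩; simpa using i.isLt
  rw [himg, Set.ncard_image_of_injective _ (Fin.castLE_injective hkn), Set.ncard_univ]
  simp

/-- The key single-force validity lemma. -/
lemma forceValid_aux (hn : 0 < n) (hk : 0 < k) {x : ℕ} (hx1 : k ≤ x) (hx2 : x < n)
    (blue forced : Set (Fin n))
    (hb : ∀ z : Fin n, (z : ℕ) < k * (x / k) → z ∈ blue)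
    (hxb : fv hn x ∉ blue) (hf : fv hn (srcN k x) ∉ forced) :
    zfForceValid (SimpleGraph.pathGraph n) blue forced (fv hn (srcN k x)) (fv hn x) := by
  obtain ⟨e1, e2, e3, e4⟩ := srcN_key hk hx1
  have hs_lt : srcN k x < x := by omega
  have hs_n : srcN k x < n := lt_trans hs_lt hx2
  have hsv : ((fv hn (srcN k x) : Fin n) : ℕ) = srcN k x := fv_val hn hs_n
  have hxv : ((fv hn x : Fin n) : ℕ) = x := fv_val hn hx2
  refine ⟨hb _ (by omega), hxb, hf, ?_⟩
  rcases Nat.eq_zero_or_pos (x % k) with hr | hr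
  · -- adjacent force: src = x - 1
    left
    have hsx : srcN k x + 1 = x := by omega
    constructor
    · rw [SimpleGraph.pathGraph_adj]; left; omega
    · intro y hadj hyb
      rw [SimpleGraph.pathGraph_adj] at hadj
      rcases hadj with h | h
      · apply Fin.ext; omega
      · exact absurd (hb y (by omega)) hyb
  · -- hop: all neighbors of src are blue
    right
    intro y hadj
    rw [SimpleGraph.pathGraph_adj] at hadj
    rcases hadj with h | h
    · exact hb y (by omega)
    · exact hb y (by omega)

lemma LU_cons (hn : 0 < n) {m : ℕ} (hm : m < n) :
    LU hn k m = pairU hn k m :: LU hn k (m + 1) := by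
  unfold LU
  have h1 : n - m = (n - (m + 1)) + 1 := by omega
  rw [h1, List.range_succ_eq_map, List.map_cons, List.map_map]
  simp only [add_zero]
  congr 1
  apply List.map_congr_left
  intro i _
  simp only [Function.comp_apply]
  congr 1
  omega

lemma valid_LU (hn : 0 < n) (hk : 0 < k) :
    ∀ c m, n - m = c → k ≤ m →
      ∀ forced : Set (Fin n),
        (∀ y, m ≤ y → y < n → fv hn (srcN k y) ∉ forced) →
        zfValidList (SimpleGraph.pathGraph n) {z : Fin n | (z : ℕ) < m} forced
          (LU hn k m) := by
  intro c
  induction c with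
  | zero =>
    intro m hc _ forced _
    have : LU hn k m = [] := by unfold LU; rw [hc]; simp
    rw [this]; trivial
  | succ c ih =>
    intro m hc hkm forced hforced
    have hm : m < n := by omega
    rw [LU_cons hn hm]
    refine ⟨?_, ?_⟩
    · -- the force (src m, m) is valid
      refine forceValid_aux hn hk hkm hm _ _ ?_ ?_ (hforced m le_rfl hm)
      · intro z hz
        have : k * (m / k) ≤ m := Nat.mul_div_le m k
        simp only [Set.mem_setOf_eq]; omega
      · simp only [Set.mem_setOf_eq, fv_val hn hm]; omega
    · -- the tail is valid
      have hins : insert (pairU hn k m).2 {z : Fin n | (z : ℕ) < m} =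
          {z : Fin n | (z : ℕ) < m + 1} := by
        ext z
        simp only [Set.mem_insert_iff, Set.mem_setOf_eq, pairU]
        constructor
        · rintro (rfl | h)
          · rw [fv_val hn hm]; omega
          · omega
        · intro h
          rcases Nat.lt_or_ge (z : ℕ) m with h' | h'
          · right; exact h'
          · left; apply Fin.ext; rw [fv_val hn hm]; omega
      rw [hins]
      apply ih (m + 1) (by omega) (by omega)
      intro y hy1 hy2 hmem
      rcases Set.mem_insert_iff.1 hmem with heq | hmem'
      · -- fv (srcN k y) = fv (srcN k m) : impossible since y > m
        have hsy : srcN k y < n := lt_trans (srcN_lt hk (by omega)) hy2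
        have hsm : srcN k m < n := lt_trans (srcN_lt hk hkm) hm
        have : srcN k y = srcN k m := by
          have := congrArg (fun z : Fin n => (z : ℕ)) heq
          simpa [pairU, fv_val hn hsy, fv_val hn hsm] using this
        have := srcN_inj hk (by omega) hkm this
        omega
      · exact hforced y (by omega) hy2 hmem'

lemma endBlue_LU (hn : 0 < n) (hk : 0 < k) (hkn : k ≤ n) :
    endBlue (BU n k) (LU hn k k) = Set.univ := by
  ext x
  simp only [endBlue, Set.mem_union, Set.mem_setOf_eq, Set.mem_univ, iff_true]
  rcases Nat.lt_or_ge (x : ℕ) k with h | h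
  · left; exact h
  · right
    have hx : (x : ℕ) < n := x.isLt
    have hs : srcN k (x : ℕ) < n := lt_trans (srcN_lt hk h) hx
    refine ⟨fv hn (srcN k (x : ℕ)), ?_⟩
    have : (fv hn (srcN k (x : ℕ)), x) ∈ FU hn k := by
      rw [mem_FU hn hk]
      exact ⟨h, fv_val hn hs⟩
    exact this

lemma isZFForceSet_FU (hn : 0 < n) (hk : 0 < k) (hkn : k ≤ n) :
    IsZFForceSet (SimpleGraph.pathGraph n) (BU n k) (FU hn k) := by
  refine ⟨LU hn k k, ?_, ?_, rfl⟩
  · have := valid_LU hn hk (n - k) k rfl le_rfl ∅ (fun _ _ _ h => h)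
    have hBU : BU n k = {z : Fin n | (z : ℕ) < k} := rfl
    rw [hBU]
    exact this
  · intro u w hvalid
    have := hvalid.2.1
    rw [endBlue_LU hn hk hkn] at this
    exact this (Set.mem_univ w)

lemma blueAt_FU (hn : 0 < n) (hk : 0 < k) (hkn : k ≤ n) :
    ∀ j, zfBlueAt (SimpleGraph.pathGraph n) (FU hn k) (BU n k) j =
      {x : Fin n | (x : ℕ) < k * (j + 1)} := by
  intro j
  induction j with
  | zero => simp [zfBlueAt, BU]
  | succ j ih =>
    have hstep : zfBlueAt (SimpleGraph.pathGraph n) (FU hn k) (BU n k) (j + 1) =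
        zfBlueAt (SimpleGraph.pathGraph n) (FU hn k) (BU n k) j ∪
          {w | ∃ v, (v, w) ∈ FU hn k ∧ v ∈ zfBlueAt (SimpleGraph.pathGraph n) (FU hn k) (BU n k) j ∧
            w ∉ zfBlueAt (SimpleGraph.pathGraph n) (FU hn k) (BU n k) j ∧
            (∀ w', (v, w') ∈ FU hn k → w' ∈ zfBlueAt (SimpleGraph.pathGraph n) (FU hn k) (BU n k) j → w' ∈ BU n k) ∧
            (((SimpleGraph.pathGraph n).Adj v w ∧
              ∀ x, (SimpleGraph.pathGraph n).Adj v x →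
                x ∉ zfBlueAt (SimpleGraph.pathGraph n) (FU hn k) (BU n k) j → x = w) ∨
              ∀ x, (SimpleGraph.pathGraph n).Adj v x →
                x ∈ zfBlueAt (SimpleGraph.pathGraph n) (FU hn k) (BU n k) j)} := rfl
    rw [hstep, ih]
    ext x
    simp only [Set.mem_union, Set.mem_setOf_eq]
    constructor
    · rintro (h | ⟨v, hvF, hvB, hxB, _, _⟩)
      · have : k * (j + 1) ≤ k * (j + 1 + 1) := Nat.mul_le_mul_left k (by omega)
        omega
      · rw [mem_FU hn hk] at hvF
        obtain ⟨hw1, hw2⟩ := hvF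
        dsimp only at hw1 hw2
        by_contra hcon
        push_neg at hcon
        have hee : k * (j + 1 + 1) = k * (j + 2) := by ring
        have hxk : k * (j + 2) ≤ (x : ℕ) := by omega
        have hdiv : j + 2 ≤ (x : ℕ) / k := (Nat.le_div_iff_mul_le hk).2 (by linarith)
        obtain ⟨e1, e2, e3, e4⟩ := srcN_key hk hw1
        have h6 : k * (j + 2) ≤ k * ((x : ℕ) / k) := Nat.mul_le_mul_left k hdiv
        have h7 : k * (j + 2) = k * (j + 1) + k := by ring
        omega
    · intro hx
      rcases Nat.lt_or_ge (x : ℕ) (k * (j + 1)) with h | h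
      · left; exact h
      · right
        have hx1 : k ≤ (x : ℕ) := by
          have : k * 1 ≤ k * (j + 1) := Nat.mul_le_mul_left k (by omega)
          omega
        have hx2 : (x : ℕ) < n := x.isLt
        have hdiv : (x : ℕ) / k = j + 1 := by
          refine Nat.div_eq_of_lt_le ?_ ?_ <;> [linarith; linarith [hx]]
        have hs_n : srcN k (x : ℕ) < n := lt_trans (srcN_lt hk hx1) hx2
        have hvalid := forceValid_aux hn hk hx1 hx2 {z : Fin n | (z : ℕ) < k * (j + 1)} ∅
          (by intro z hz; rw [hdiv] at hz; exact hz)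
          (by simp only [Set.mem_setOf_eq, fv_val hn hx2]; omega)
          (Set.notMem_empty _)
        have hfvx : fv hn ((x : ℕ)) = x := fv_self hn x
        rw [hfvx] at hvalid
        refine ⟨fv hn (srcN k (x : ℕ)), ?_, hvalid.1, ?_, ?_, hvalid.2.2.2⟩
        · rw [mem_FU hn hk]
          exact ⟨hx1, fv_val hn hs_n⟩
        · omega
        · intro w' hw'F hw'B
          rw [mem_FU hn hk] at hw'F
          obtain ⟨hw1, hw2⟩ := hw'F
          dsimp only at hw1 hw2
          rw [fv_val hn hs_n] at hw2
          have : (w' : ℕ) = (x : ℕ) := srcN_inj hk hw1 hx1 hw2.symm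
          omega

lemma thZF_BU_le (hn : 0 < n) (hk : 0 < k) (hkn : k ≤ n) (t : ℕ) (hnt : n ≤ k * (t + 1)) :
    thZF (SimpleGraph.pathGraph n) (BU n k) ≤ ((k + t : ℕ) : ℕ∞) := by
  have hblue : zfBlueAt (SimpleGraph.pathGraph n) (FU hn k) (BU n k) t = Set.univ := by
    rw [blueAt_FU hn hk hkn]
    ext x
    simp only [Set.mem_setOf_eq, Set.mem_univ, iff_true]
    exact lt_of_lt_of_le x.isLt hnt
  have h1 : ptZFofF (SimpleGraph.pathGraph n) (FU hn k) (BU n k) ≤ (t : ℕ∞) :=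
    sInf_le ⟨t, rfl, hblue⟩
  have h2 : ptZF (SimpleGraph.pathGraph n) (BU n k) ≤ (t : ℕ∞) :=
    le_trans (sInf_le ⟨FU hn k, isZFForceSet_FU hn hk hkn, rfl⟩) h1
  unfold thZF
  rw [ncard_BU hkn]
  calc ((k : ℕ∞)) + ptZF (SimpleGraph.pathGraph n) (BU n k) ≤ (k : ℕ∞) + (t : ℕ∞) :=
        add_le_add_right h2 _
    _ = ((k + t : ℕ) : ℕ∞) := by push_cast; rfl

/-! #### Lower bound -/

lemma zfValid_fst_nodup {V : Type*} (G : SimpleGraph V) :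
    ∀ (L : List (V × V)) (blue forced : Set V), zfValidList G blue forced L →
      (∀ p ∈ L, p.1 ∉ forced) ∧ (L.map Prod.fst).Nodup := by
  intro L
  induction L with
  | nil => intro blue forced _; exact ⟨by simp, by simp⟩
  | cons p L ih =>
    intro blue forced hvalid
    obtain ⟨hp, hL⟩ := hvalid
    obtain ⟨ih1, ih2⟩ := ih _ _ hL
    constructor
    · intro q hq
      rcases List.mem_cons.1 hq with rfl | hq'
      · exact hp.2.2.1
      · intro hqf
        exact ih1 q hq' (Set.mem_insert_iff.2 (Or.inr hqf))
    · rw [List.map_cons, List.nodup_cons]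
      refine ⟨?_, ih2⟩
      intro hmem
      obtain ⟨q, hq, hqe⟩ := List.mem_map.1 hmem
      have := ih1 q hq
      rw [hqe] at this
      exact this (Set.mem_insert _ _)

lemma force_unique {V : Type*} {G : SimpleGraph V} {B : Set V} {F : Set (V × V)}
    (h : IsZFForceSet G B F) :
    ∀ v w w', (v, w) ∈ F → (v, w') ∈ F → w = w' := by
  obtain ⟨L, hvalid, _, rfl⟩ := h
  intro v w w' hw hw'
  have hnd := (zfValid_fst_nodup G L _ _ hvalid).2
  have := List.inj_on_of_nodup_map hnd hw hw' rfl
  exact congrArg Prod.snd this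

lemma zfBlueAt_mono {V : Type*} (G : SimpleGraph V) (F : Set (V × V)) (B : Set V) (j : ℕ) :
    zfBlueAt G F B j ⊆ zfBlueAt G F B (j + 1) := by
  intro x hx
  exact Set.mem_union_left _ hx

lemma blue_src {V : Type*} (G : SimpleGraph V) (F : Set (V × V)) (B : Set V) :
    ∀ j w, w ∈ zfBlueAt G F B (j + 1) → w ∉ B →
      ∃ v, (v, w) ∈ F ∧ v ∈ zfBlueAt G F B j := by
  intro j
  induction j with
  | zero =>
    intro w hw hwB
    rcases hw with h | ⟨v, hvF, hvB, _⟩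
    · exact absurd h hwB
    · exact ⟨v, hvF, hvB⟩
  | succ j ih =>
    intro w hw hwB
    rcases hw with h | ⟨v, hvF, hvB, _⟩
    · obtain ⟨v, hvF, hvB⟩ := ih w h hwB
      exact ⟨v, hvF, zfBlueAt_mono G F B j hvB⟩
    · exact ⟨v, hvF, hvB⟩

lemma card_blueAt {V : Type*} [Finite V] {G : SimpleGraph V} {B : Set V} {F : Set (V × V)}
    (hF : IsZFForceSet G B F) :
    ∀ j, (zfBlueAt G F B j).ncard ≤ B.ncard * (j + 1) := by
  intro j
  induction j with
  | zero => simp [zfBlueAt]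
  | succ j ih =>
    have hstep : (zfBlueAt G F B (j + 1) \ B).ncard ≤ (zfBlueAt G F B j).ncard := by
      have hex : ∀ w ∈ zfBlueAt G F B (j + 1) \ B,
          ∃ v, (v, w) ∈ F ∧ v ∈ zfBlueAt G F B j := by
        intro w hw
        exact blue_src G F B j w hw.1 hw.2
      classical
      set f : V → V := fun w =>
        if h : ∃ v, (v, w) ∈ F ∧ v ∈ zfBlueAt G F B j then h.choose else w with hf
      apply Set.ncard_le_ncard_of_injOn f
      · intro w hw
        have h := hex w hw
        simp only [hf, dif_pos h]
        exact h.choose_spec.2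
      · intro w hw w' hw' heq
        have h := hex w hw
        have h' := hex w' hw'
        simp only [hf, dif_pos h, dif_pos h'] at heq
        have h1 : (h.choose, w) ∈ F := h.choose_spec.1
        have h2 : (h'.choose, w') ∈ F := h'.choose_spec.1
        rw [heq] at h1
        exact force_unique hF _ _ _ h1 h2
    have hsub : zfBlueAt G F B (j + 1) ⊆ B ∪ (zfBlueAt G F B (j + 1) \ B) := by
      intro x hx
      by_cases hxB : x ∈ B
      · exact Or.inl hxB
      · exact Or.inr ⟨hx, hxB⟩
    calc (zfBlueAt G F B (j + 1)).ncard
        ≤ (B ∪ (zfBlueAt G F B (j + 1) \ B)).ncard :=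
          Set.ncard_le_ncard hsub (Set.toFinite _)
      _ ≤ B.ncard + (zfBlueAt G F B (j + 1) \ B).ncard := Set.ncard_union_le _ _
      _ ≤ B.ncard + (zfBlueAt G F B j).ncard := by omega
      _ ≤ B.ncard + B.ncard * (j + 1) := by omega
      _ = B.ncard * (j + 1 + 1) := by ring

lemma count_bound {n : ℕ} {B : Set (Fin n)} {F : Set (Fin n × Fin n)} {t : ℕ}
    (hF : IsZFForceSet (SimpleGraph.pathGraph n) B F)
    (ht : zfBlueAt (SimpleGraph.pathGraph n) F B t = Set.univ) :
    n ≤ B.ncard * (t + 1) := by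
  have h1 := card_blueAt hF t
  rw [ht] at h1
  rwa [Set.ncard_univ, Nat.card_eq_fintype_card, Fintype.card_fin] at h1

/-! #### `sInf` membership in `ℕ∞` -/

lemma enat_sInf_mem {S : Set ℕ∞} (h : S.Nonempty) : sInf S ∈ S := by
  rcases eq_or_ne (sInf S) ⊤ with htop | hne
  · obtain ⟨a, ha⟩ := h
    have h1 : a = ⊤ := top_le_iff.1 (htop ▸ sInf_le ha)
    rw [htop, ← h1]; exact ha
  · have hlt : sInf S < ⊤ := lt_top_iff_ne_top.2 hne
    obtain ⟨a, haS, halt⟩ := sInf_lt_iff.1 hlt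
    lift a to ℕ using halt.ne
    have hT : {m : ℕ | (m : ℕ∞) ∈ S}.Nonempty := ⟨a, haS⟩
    have h1 : ((sInf {m : ℕ | (m : ℕ∞) ∈ S} : ℕ) : ℕ∞) ∈ S := Nat.sInf_mem hT
    have h2 : sInf S = ((sInf {m : ℕ | (m : ℕ∞) ∈ S} : ℕ) : ℕ∞) := by
      apply le_antisymm (sInf_le h1)
      apply le_sInf
      intro b hb
      rcases eq_or_ne b ⊤ with rfl | hbne
      · exact le_top
      · lift b to ℕ using hbne
        exact_mod_cast Nat.sInf_le hb
    rw [h2]; exact h1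

/-! #### Number theory -/

lemma ceil_char {n : ℕ} (hn : 1 ≤ n) (m : ℕ) :
    (⌈2 * Real.sqrt n - 1⌉).toNat ≤ m ↔ 4 * n ≤ (m + 1) ^ 2 := by
  rw [Int.toNat_le, Int.ceil_le]
  have hs : Real.sqrt ((4 : ℝ) * n) = 2 * Real.sqrt n := by
    rw [show (4 : ℝ) * n = 2 ^ 2 * n by ring, Real.sqrt_mul (by positivity),
      Real.sqrt_sq (by norm_num)]
  constructor
  · intro h
    have h1 : 2 * Real.sqrt n ≤ (m : ℝ) + 1 := by push_cast at h; linarith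
    have h2 : (4 : ℝ) * n ≤ ((m : ℝ) + 1) ^ 2 := by
      nlinarith [Real.sq_sqrt (show (0 : ℝ) ≤ n by positivity), Real.sqrt_nonneg (n : ℝ)]
    exact_mod_cast h2
  · intro h
    have h2 : (4 : ℝ) * n ≤ ((m : ℝ) + 1) ^ 2 := by exact_mod_cast h
    have h1 : 2 * Real.sqrt n ≤ (m : ℝ) + 1 := by
      rw [← hs]
      calc Real.sqrt (4 * n) ≤ Real.sqrt (((m : ℝ) + 1) ^ 2) := Real.sqrt_le_sqrt h2
        _ = (m : ℝ) + 1 := Real.sqrt_sq (by positivity)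
    push_cast
    linarith

lemma num_lb {n : ℕ} (hn : 1 ≤ n) (k t : ℕ) (h : n ≤ k * (t + 1)) :
    (⌈2 * Real.sqrt n - 1⌉).toNat ≤ k + t := by
  rw [ceil_char hn]
  have h1 : 4 * (k * (t + 1)) ≤ (k + t + 1) ^ 2 := by
    zify
    nlinarith [sq_nonneg ((k : ℤ) - (t + 1))]
  calc 4 * n ≤ 4 * (k * (t + 1)) := by omega
    _ ≤ (k + t + 1) ^ 2 := h1

lemma num_ub {n : ℕ} (hn : 1 ≤ n) :
    ∃ k t : ℕ, 0 < k ∧ k ≤ n ∧ n ≤ k * (t + 1) ∧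
      k + t = (⌈2 * Real.sqrt n - 1⌉).toNat := by
  set c := (⌈2 * Real.sqrt n - 1⌉).toNat with hc
  have h1 : 0 < c := by
    by_contra hcon
    push_neg at hcon
    have := (ceil_char hn 0).1 (by omega)
    omega
  have h2 : 4 * n ≤ (c + 1) ^ 2 := (ceil_char hn c).1 le_rfl
  have h3 : c ≤ n := by
    rw [hc, ceil_char hn]
    zify
    nlinarith [sq_nonneg ((n : ℤ) - 1)]
  set a := (c + 1) / 2 with ha
  have hdm : 2 * a + (c + 1) % 2 = c + 1 := by omega
  have hr : (c + 1) % 2 = 0 ∨ (c + 1) % 2 = 1 := by omega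
  refine ⟨a, c - a, by omega, by omega, ?_, by omega⟩
  have hca : c - a + 1 = a + (c + 1) % 2 := by omega
  rw [hca]
  rcases hr with h | h
  · have he : (2 * a) ^ 2 = 4 * (a * (a + 0)) := by ring
    have : c + 1 = 2 * a := by omega
    rw [h]
    rw [this, he] at h2
    omega
  · have he : (2 * a + 1) ^ 2 = 4 * (a * (a + 1)) + 1 := by ring
    have : c + 1 = 2 * a + 1 := by omega
    rw [h]
    rw [this, he] at h2
    omega

end Stmt6Aux

/-- `th_⌊Z⌋(P_n) = ⌈2√n − 1⌉` for all `n ≥ 1`. -/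
theorem stmt6 (n : ℕ) (hn : 1 ≤ n) :
    thZFgraph (SimpleGraph.pathGraph n) = ((⌈2 * Real.sqrt n - 1⌉).toNat : ℕ∞) := by
  have hn0 : 0 < n := hn
  set c := (⌈2 * Real.sqrt n - 1⌉).toNat with hc
  apply le_antisymm
  · -- upper bound
    obtain ⟨k, t, hk, hkn, hnt, hkt⟩ := num_ub hn
    calc thZFgraph (SimpleGraph.pathGraph n)
        ≤ thZF (SimpleGraph.pathGraph n) (BU n k) := sInf_le ⟨BU n k, rfl⟩
      _ ≤ ((k + t : ℕ) : ℕ∞) := thZF_BU_le hn0 hk hkn t hnt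
      _ = (c : ℕ∞) := by rw [hkt]
  · -- lower bound
    apply le_sInf
    rintro m ⟨B, rfl⟩
    unfold thZF
    rcases Set.eq_empty_or_nonempty
        {r : ℕ∞ | ∃ F, IsZFForceSet (SimpleGraph.pathGraph n) B F ∧
          r = ptZFofF (SimpleGraph.pathGraph n) F B} with hS | hS
    · unfold ptZF
      rw [hS, sInf_empty, add_top]
      exact le_top
    · have hmem := enat_sInf_mem hS
      obtain ⟨F, hF, hFe⟩ := hmem
      unfold ptZF
      rw [hFe]
      rcases Set.eq_empty_or_nonempty
          {r : ℕ∞ | ∃ t : ℕ, r = t ∧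
            zfBlueAt (SimpleGraph.pathGraph n) F B t = Set.univ} with hS2 | hS2
      · unfold ptZFofF
        rw [hS2, sInf_empty, add_top]
        exact le_top
      · have hmem2 := enat_sInf_mem hS2
        obtain ⟨t, hte, hblue⟩ := hmem2
        have hcount : n ≤ B.ncard * (t + 1) := count_bound hF hblue
        have hlow : c ≤ B.ncard + t := num_lb hn B.ncard t hcount
        unfold ptZFofF
        rw [hte]
        calc (c : ℕ∞) ≤ ((B.ncard + t : ℕ) : ℕ∞) := by exact_mod_cast hlow
          _ = (B.ncard : ℕ∞) + (t : ℕ∞) := by push_cast; rfl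

end ZFT
end

section
/- For each fixed positive integer t, there are, up to isomorphism, only finitely many finite simple graphs G with th_⌊Z⌋(G) = t. -/
open SimpleGraph

namespace ZFT

variable {V : Type*} {α : Type*} {β : Type*}

/-- In ℕ∞, an infimum bounded by a natural is witnessed by an element bounded by it. -/
lemma sInf_le_nat {S : Set ℕ∞} {t : ℕ} (h : sInf S ≤ (t : ℕ∞)) :
    ∃ a ∈ S, a ≤ (t : ℕ∞) := by
  have hlt : sInf S < ((t + 1 : ℕ) : ℕ∞) :=
    lt_of_le_of_lt h (by exact_mod_cast Nat.lt_succ_self t)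
  obtain ⟨a, ha, hlt'⟩ := sInf_lt_iff.mp hlt
  have hne : a ≠ ⊤ := fun hh => by simp [hh] at hlt'
  lift a to ℕ using hne
  refine ⟨a, ha, ?_⟩
  have : a < t + 1 := by exact_mod_cast hlt'
  exact_mod_cast Nat.lt_succ_iff.mp this

/-- In a valid list of `⌊Z⌋` forces, no forcer was already in `forced`. -/
lemma zf_list_not_forced (G : SimpleGraph V) :
    ∀ (L : List (V × V)) (blue forced : Set V), zfValidList G blue forced L →
      ∀ p ∈ L, p.1 ∉ forced := by
  intro L
  induction L with
  | nil => intro _ _ _ p hp; simp at hp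
  | cons q L ih =>
    intro blue forced hv p hp
    rcases List.mem_cons.mp hp with h | h
    · subst h; exact hv.1.2.2.1
    · intro hf
      exact ih _ _ hv.2 p h (Set.mem_insert_of_mem _ hf)

/-- In a valid list of `⌊Z⌋` forces, each vertex forces at most one vertex. -/
lemma zf_list_uniq (G : SimpleGraph V) :
    ∀ (L : List (V × V)) (blue forced : Set V), zfValidList G blue forced L →
      ∀ u w w', (u, w) ∈ L → (u, w') ∈ L → w = w' := by
  intro L
  induction L with
  | nil => simp
  | cons q L ih =>
    intro blue forced hv u w w' hw hw'
    rcases List.mem_cons.mp hw with h1 | h1 <;> rcases List.mem_cons.mp hw' with h2 | h2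
    · exact (Prod.ext_iff.mp (h1.trans h2.symm)).2
    · exfalso
      have : u ∉ insert q.1 forced := zf_list_not_forced G L _ _ hv.2 (u, w') h2
      rw [← h1] at this
      exact this (Set.mem_insert _ _)
    · exfalso
      have : u ∉ insert q.1 forced := zf_list_not_forced G L _ _ hv.2 (u, w) h1
      rw [← h2] at this
      exact this (Set.mem_insert _ _)
    · exact ih _ _ hv.2 u w w' h1 h2

/-- Growth bound: under simultaneous `⌊Z⌋` forcing with a functional force set,
the blue set at most doubles each round. -/
lemma zf_growth [Finite V] (G : SimpleGraph V) (F : Set (V × V)) (B : Set V)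
    (hF : ∀ u w w', (u, w) ∈ F → (u, w') ∈ F → w = w') :
    ∀ k, (zfBlueAt G F B k).ncard ≤ B.ncard * 2 ^ k := by
  classical
  intro k
  induction k with
  | zero => simp [zfBlueAt]
  | succ k ih =>
    set P := zfBlueAt G F B k with hP
    set Nw : Set V := {w | ∃ v, (v, w) ∈ F ∧ v ∈ P ∧ w ∉ P ∧
        (∀ w', (v, w') ∈ F → w' ∈ P → w' ∈ B) ∧
        ((G.Adj v w ∧ ∀ x, G.Adj v x → x ∉ P → x = w) ∨
          ∀ x, G.Adj v x → x ∈ P)} with hNw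
    have hstep : zfBlueAt G F B (k + 1) = P ∪ Nw := rfl
    have hNP : Nw.ncard ≤ P.ncard := by
      apply Set.ncard_le_ncard_of_injOn
        (fun w => if h : ∃ v, (v, w) ∈ F ∧ v ∈ P then h.choose else w)
      · intro w hw
        obtain ⟨v, hv1, hv2, _⟩ := hw
        have h : ∃ v, (v, w) ∈ F ∧ v ∈ P := ⟨v, hv1, hv2⟩
        simp only [dif_pos h]
        exact h.choose_spec.2
      · intro w1 h1 w2 h2 heq
        obtain ⟨v1, hv1, hv1', _⟩ := h1
        obtain ⟨v2, hv2, hv2', _⟩ := h2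
        have e1 : ∃ v, (v, w1) ∈ F ∧ v ∈ P := ⟨v1, hv1, hv1'⟩
        have e2 : ∃ v, (v, w2) ∈ F ∧ v ∈ P := ⟨v2, hv2, hv2'⟩
        simp only [dif_pos e1, dif_pos e2] at heq
        exact hF _ _ _ (heq ▸ e1.choose_spec.1) e2.choose_spec.1
    have hun : (P ∪ Nw).ncard ≤ P.ncard + Nw.ncard := Set.ncard_union_le _ _
    have h2 : B.ncard * 2 ^ (k + 1) = B.ncard * 2 ^ k + B.ncard * 2 ^ k := by ring
    rw [hstep]
    omega

/-- Finiteness of simple graphs on a finite vertex type. -/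
lemma finite_simpleGraph (W : Type*) [Finite W] : Finite (SimpleGraph W) :=
  Finite.of_injective (fun G => G.Adj) fun _ _ h => SimpleGraph.ext h

/-- Vertex bound: a graph with `⌊Z⌋` throttling number at most `t` has at most
`t * 2 ^ t` vertices. -/
lemma card_le_of_thZF {W : Type*} [Fintype W] (G : SimpleGraph W) {t : ℕ}
    (h : thZFgraph G ≤ (t : ℕ∞)) : Fintype.card W ≤ t * 2 ^ t := by
  obtain ⟨a, ⟨B, rfl⟩, ha⟩ := sInf_le_nat h
  rw [thZF] at ha
  have hB : B.ncard ≤ t := by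
    have : (B.ncard : ℕ∞) ≤ (t : ℕ∞) := le_trans (le_add_right le_rfl) ha
    exact_mod_cast this
  have hpt : ptZF G B ≤ (t : ℕ∞) := le_trans (le_add_self) ha
  obtain ⟨a, ⟨F, hFS, rfl⟩, haF⟩ := sInf_le_nat hpt
  obtain ⟨a, ⟨s, rfl, hsuniv⟩, hs'⟩ := sInf_le_nat haF
  have hs : s ≤ t := by exact_mod_cast hs'
  obtain ⟨L, hL, _, rfl⟩ := hFS
  have hFuniq : ∀ u w w', (u, w) ∈ ({p | p ∈ L} : Set (W × W)) →
      (u, w') ∈ ({p | p ∈ L} : Set (W × W)) → w = w' := by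
    intro u w w' hw hw'
    exact zf_list_uniq G L B ∅ hL u w w' hw hw'
  have hgrow := zf_growth G {p | p ∈ L} B hFuniq s
  rw [hsuniv] at hgrow
  have hcard : (Set.univ : Set W).ncard = Fintype.card W := by
    rw [Set.ncard_univ, Nat.card_eq_fintype_card]
  rw [hcard] at hgrow
  calc Fintype.card W ≤ B.ncard * 2 ^ s := hgrow
    _ ≤ t * 2 ^ t := Nat.mul_le_mul hB (Nat.pow_le_pow_right (by norm_num) hs)

/-- for each fixed `t ≥ 1` there are, up to isomorphism, only finitely
many graphs with `⌊Z⌋` throttling number `t`. -/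
theorem stmt10 (t : ℕ) (ht : 0 < t) :
    {p : (n : ℕ) × SimpleGraph (Fin n) | thZFgraph p.2 = (t : ℕ∞)}.Finite := by
  have hsub : {p : (n : ℕ) × SimpleGraph (Fin n) | thZFgraph p.2 = (t : ℕ∞)} ⊆
      ⋃ n ∈ Set.Iic (t * 2 ^ t), Set.range (Sigma.mk n) := by
    rintro ⟨n, G⟩ hp
    have hb : n ≤ t * 2 ^ t := by
      have := card_le_of_thZF G (le_of_eq hp)
      simpa using this
    simp only [Set.mem_iUnion]
    exact ⟨n, hb, G, rfl⟩
  apply Set.Finite.subset _ hsub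
  apply Set.Finite.biUnion (Set.finite_Iic _)
  intro n _
  have : Finite (SimpleGraph (Fin n)) := finite_simpleGraph _
  exact Set.finite_range _

end ZFT
end

section
/- For each fixed positive integer t, there are, up to isomorphism, only finitely many finite simple graphs G with th_Z(G) = t. -/
open SimpleGraph

namespace ZFT

variable {V : Type*} {α : Type*} {β : Type*}

lemma zStep_ncard [Finite V] (G : SimpleGraph V) (S : Set V) :
    (zStep G S).ncard ≤ 2 * S.ncard := by
  classical
  set g : V → V := fun u =>
    if h : ∃ w, w ∉ S ∧ G.Adj u w ∧ ∀ x, G.Adj u x → x ∉ S → x = w then h.choose else u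
    with hg
  have hsub : zStep G S ⊆ S ∪ g '' S := by
    rintro w (hw | ⟨u, hu, hadj, huniq⟩)
    · exact Or.inl hw
    by_cases hwS : w ∈ S
    · exact Or.inl hwS
    refine Or.inr ⟨u, hu, ?_⟩
    have h : ∃ w', w' ∉ S ∧ G.Adj u w' ∧ ∀ x, G.Adj u x → x ∉ S → x = w' :=
      ⟨w, hwS, hadj, huniq⟩
    simp only [hg, dif_pos h]
    obtain ⟨hw', hadj', _⟩ := h.choose_spec
    exact huniq _ hadj' hw'
  calc (zStep G S).ncard ≤ (S ∪ g '' S).ncard := Set.ncard_le_ncard hsub (Set.toFinite _)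
    _ ≤ S.ncard + (g '' S).ncard := Set.ncard_union_le _ _
    _ ≤ S.ncard + S.ncard := by
        have := Set.ncard_image_le (f := g) (s := S) S.toFinite
        omega
    _ = 2 * S.ncard := by ring

lemma zStep_iter_ncard [Finite V] (G : SimpleGraph V) (B : Set V) (p : ℕ) :
    ((zStep G)^[p] B).ncard ≤ 2 ^ p * B.ncard := by
  induction p with
  | zero => simp
  | succ p ih =>
    rw [Function.iterate_succ_apply']
    calc (zStep G ((zStep G)^[p] B)).ncard ≤ 2 * ((zStep G)^[p] B).ncard :=
          zStep_ncard G _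
      _ ≤ 2 * (2 ^ p * B.ncard) := by omega
      _ = 2 ^ (p + 1) * B.ncard := by ring

/-- for each fixed `t ≥ 1` there are, up to isomorphism, only finitely
many graphs with standard throttling number `t`. -/
theorem stmt13 (t : ℕ) (ht : 0 < t) :
    {p : (n : ℕ) × SimpleGraph (Fin n) | thZgraph p.2 = (t : ℕ∞)}.Finite := by
  classical
  have key : ∀ (n : ℕ) (G : SimpleGraph (Fin n)), thZgraph G = (t : ℕ∞) →
      n ≤ 2 ^ t * t := by
    intro n G hG
    have hlt : thZgraph G < ((t : ℕ∞) + 1) := by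
      rw [hG]; exact ENat.lt_add_one_iff (by simp) |>.mpr le_rfl
    obtain ⟨x, ⟨B, hB, rfl⟩, hx⟩ := sInf_lt_iff.mp hlt
    -- thZ G B < t + 1, i.e. ≤ t
    have hth : thZ G B ≤ (t : ℕ∞) :=
      (ENat.lt_add_one_iff (by simp : (t : ℕ∞) ≠ ⊤)).mp hx
    unfold thZ at hth
    have hcard : (B.ncard : ℕ∞) ≤ (t : ℕ∞) := le_trans (le_add_right le_rfl) hth
    have hcard' : B.ncard ≤ t := by exact_mod_cast hcard
    have hpt : ptZ G B ≤ (t : ℕ∞) := le_trans (le_add_left le_rfl) hth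
    have hptlt : ptZ G B < ((t : ℕ∞) + 1) :=
      lt_of_le_of_lt hpt (ENat.lt_add_one_iff (by simp) |>.mpr le_rfl)
    obtain ⟨x, ⟨p, rfl, hpuniv⟩, hxlt⟩ := sInf_lt_iff.mp hptlt
    have hple : p ≤ t := by
      have : (p : ℕ∞) < ((t + 1 : ℕ) : ℕ∞) := by exact_mod_cast hxlt
      have := ENat.coe_lt_coe.mp (by exact_mod_cast this)
      omega
    have hn : n = (Set.univ : Set (Fin n)).ncard := by
      simp [Set.ncard_univ]
    have := zStep_iter_ncard G B p
    rw [hpuniv] at this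
    calc n = (Set.univ : Set (Fin n)).ncard := hn
      _ ≤ 2 ^ p * B.ncard := this
      _ ≤ 2 ^ t * t := Nat.mul_le_mul (Nat.pow_le_pow_right (by norm_num) hple) hcard'
  have hfin : ∀ n : ℕ, Finite (SimpleGraph (Fin n)) := fun n =>
    Finite.of_injective (fun G => G.Adj) fun _ _ h => SimpleGraph.ext h
  apply Set.Finite.subset
    (s := ⋃ n ∈ Set.Iic (2 ^ t * t),
      Sigma.mk n '' (Set.univ : Set (SimpleGraph (Fin n))))
  · exact Set.Finite.biUnion (Set.finite_Iic _) fun n _ =>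
      (@Set.finite_univ _ (hfin n)).image _
  · rintro ⟨n, G⟩ hG
    exact Set.mem_biUnion (key n G hG) ⟨G, trivial, rfl⟩

end ZFT
end

section
/- If G is a finite simple graph of order n and t is a positive integer with th_⌊Z⌋(G) ≤ t, then n ≤ (t+1)²/4. -/
open SimpleGraph

namespace ZFT

variable {V : Type*} {α : Type*} {β : Type*}

/-! ### Auxiliary lemmas for Statement 14 -/

lemma zf_list_distinct (G : SimpleGraph V) :
    ∀ (L : List (V × V)) (blue forced : Set V), zfValidList G blue forced L →
      (∀ p ∈ L, p.1 ∉ forced ∧ p.2 ∉ blue) ∧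
        List.Pairwise (fun p q : V × V => p.1 ≠ q.1 ∧ p.2 ≠ q.2) L := by
  intro L
  induction L with
  | nil => intro blue forced _; exact ⟨by simp, List.Pairwise.nil⟩
  | cons p L ih =>
      intro blue forced hv
      obtain ⟨hp, hL⟩ := hv
      obtain ⟨ihmem, ihpw⟩ := ih _ _ hL
      refine ⟨?_, ?_⟩
      · rintro q hq
        rcases List.mem_cons.1 hq with rfl | hq
        · exact ⟨hp.2.2.1, hp.2.1⟩
        · have := ihmem q hq
          exact ⟨fun h => this.1 (Set.mem_insert_iff.2 (Or.inr h)),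
                 fun h => this.2 (Set.mem_insert_iff.2 (Or.inr h))⟩
      · refine List.Pairwise.cons ?_ ihpw
        intro q hq
        have := ihmem q hq
        exact ⟨fun he => this.1 (he ▸ Set.mem_insert _ _),
               fun he => this.2 (he ▸ Set.mem_insert _ _)⟩

lemma zf_fst_inj {G : SimpleGraph V} {B : Set V} {F : Set (V × V)}
    (hF : IsZFForceSet G B F) :
    ∀ v w1 w2, (v, w1) ∈ F → (v, w2) ∈ F → w1 = w2 := by
  obtain ⟨L, hL, -, rfl⟩ := hF
  have hpw := (zf_list_distinct G L B ∅ hL).2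
  have hsymm : Symmetric (fun p q : V × V => p.1 ≠ q.1 ∧ p.2 ≠ q.2) :=
    fun p q hpq => ⟨hpq.1.symm, hpq.2.symm⟩
  intro v w1 w2 h1 h2
  by_contra hne
  have hpq : ((v, w1) : V × V) ≠ (v, w2) := by simp [hne]
  haveI : Std.Symm (fun p q : V × V => p.1 ≠ q.1 ∧ p.2 ≠ q.2) := ⟨fun a b h => hsymm h⟩
  exact (hpw.forall h1 h2 hpq).1 rfl

lemma zfBlueAt_succ_eq (G : SimpleGraph V) (F : Set (V × V)) (B : Set V) (s : ℕ) :
    zfBlueAt G F B (s + 1) = zfBlueAt G F B s ∪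
        {w | ∃ v, (v, w) ∈ F ∧ v ∈ zfBlueAt G F B s ∧ w ∉ zfBlueAt G F B s ∧
          (∀ w', (v, w') ∈ F → w' ∈ zfBlueAt G F B s → w' ∈ B) ∧
          ((G.Adj v w ∧ ∀ x, G.Adj v x → x ∉ zfBlueAt G F B s → x = w) ∨
            ∀ x, G.Adj v x → x ∈ zfBlueAt G F B s)} := rfl

lemma zfBlueAt_mono_succ (G : SimpleGraph V) (F : Set (V × V)) (B : Set V) (s : ℕ) :
    zfBlueAt G F B s ⊆ zfBlueAt G F B (s + 1) := by
  rw [zfBlueAt_succ_eq]; exact Set.subset_union_left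

lemma base_subset_zfBlueAt (G : SimpleGraph V) (F : Set (V × V)) (B : Set V) (s : ℕ) :
    B ⊆ zfBlueAt G F B s := by
  induction s with
  | zero => exact subset_rfl
  | succ s ih => exact ih.trans (zfBlueAt_mono_succ G F B s)

/-- The set of blue vertices at time `s` that have not yet performed a force. -/
def Ablue (G : SimpleGraph V) (F : Set (V × V)) (B : Set V) (s : ℕ) : Set V :=
  {v | v ∈ zfBlueAt G F B s ∧ ∀ w', (v, w') ∈ F → w' ∈ zfBlueAt G F B s → w' ∈ B}

lemma key_step {V : Type*} [Fintype V] {G : SimpleGraph V} {B : Set V} {F : Set (V × V)}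
    (hfst : ∀ v w1 w2, (v, w1) ∈ F → (v, w2) ∈ F → w1 = w2) (s : ℕ) :
    (Ablue G F B (s + 1)).ncard ≤ (Ablue G F B s).ncard ∧
      (zfBlueAt G F B (s + 1)).ncard ≤ (zfBlueAt G F B s).ncard + (Ablue G F B s).ncard := by
  classical
  set bs := zfBlueAt G F B s with hbs
  set N := {w | ∃ v, (v, w) ∈ F ∧ v ∈ bs ∧ w ∉ bs ∧
      (∀ w', (v, w') ∈ F → w' ∈ bs → w' ∈ B) ∧
      ((G.Adj v w ∧ ∀ x, G.Adj v x → x ∉ bs → x = w) ∨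
        ∀ x, G.Adj v x → x ∈ bs)} with hNdef
  have hstep : zfBlueAt G F B (s + 1) = bs ∪ N := rfl
  have hch : ∀ w : V, ∃ v, w ∈ N →
      (v, w) ∈ F ∧ v ∈ bs ∧ w ∉ bs ∧ (∀ w', (v, w') ∈ F → w' ∈ bs → w' ∈ B) := by
    intro w
    by_cases hw : w ∈ N
    · obtain ⟨v, h1, h2, h3, h4, -⟩ := hw
      exact ⟨v, fun _ => ⟨h1, h2, h3, h4⟩⟩
    · exact ⟨w, fun h' => absurd h' hw⟩
  choose f hf using hch
  have hfA : ∀ w ∈ N, f w ∈ Ablue G F B s := by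
    intro w hw
    obtain ⟨h1, h2, h3, h4⟩ := hf w hw
    exact ⟨h2, h4⟩
  have hfnA : ∀ w ∈ N, f w ∉ Ablue G F B (s + 1) := by
    intro w hw hmem
    obtain ⟨h1, h2, h3, h4⟩ := hf w hw
    have hwB : w ∈ B := hmem.2 w h1 (by rw [hstep]; exact Or.inr hw)
    exact h3 (base_subset_zfBlueAt G F B s hwB)
  have hfinj : Set.InjOn f N := by
    intro w1 hw1 w2 hw2 he
    exact hfst (f w1) w1 w2 (hf w1 hw1).1 (he ▸ (hf w2 hw2).1)
  constructor
  · -- |A(s+1)| ≤ |A s|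
    set g := fun v => if v ∈ bs then v else f v with hg
    have hmaps : ∀ v ∈ Ablue G F B (s + 1), g v ∈ Ablue G F B s := by
      intro v hv
      by_cases hvb : v ∈ bs
      · simp only [hg, if_pos hvb]
        refine ⟨hvb, fun w' hw' hwb => hv.2 w' hw' (zfBlueAt_mono_succ G F B s hwb)⟩
      · have hvN : v ∈ N := by
          have := hv.1; rw [hstep] at this
          exact this.resolve_left hvb
        simp only [hg, if_neg hvb]
        exact hfA v hvN
    have hinj : Set.InjOn g (Ablue G F B (s + 1)) := by
      intro v1 hv1 v2 hv2 he
      by_cases h1 : v1 ∈ bs <;> by_cases h2 : v2 ∈ bs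
      · simpa [hg, if_pos h1, if_pos h2] using he
      · have hv2N : v2 ∈ N := by have := hv2.1; rw [hstep] at this; exact this.resolve_left h2
        simp only [hg, if_pos h1, if_neg h2] at he
        exact absurd (he ▸ hv1) (hfnA v2 hv2N)
      · have hv1N : v1 ∈ N := by have := hv1.1; rw [hstep] at this; exact this.resolve_left h1
        simp only [hg, if_neg h1, if_pos h2] at he
        exact absurd (he ▸ hv2) (hfnA v1 hv1N)
      · have hv1N : v1 ∈ N := by have := hv1.1; rw [hstep] at this; exact this.resolve_left h1
        have hv2N : v2 ∈ N := by have := hv2.1; rw [hstep] at this; exact this.resolve_left h2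
        simp only [hg, if_neg h1, if_neg h2] at he
        exact hfinj hv1N hv2N he
    exact Set.ncard_le_ncard_of_injOn g hmaps hinj (Set.toFinite _)
  · -- |blue(s+1)| ≤ |blue s| + |A s|
    have hN : N.ncard ≤ (Ablue G F B s).ncard :=
      Set.ncard_le_ncard_of_injOn f hfA hfinj (Set.toFinite _)
    calc (zfBlueAt G F B (s + 1)).ncard = (bs ∪ N).ncard := by rw [hstep]
      _ ≤ bs.ncard + N.ncard := Set.ncard_union_le _ _
      _ ≤ bs.ncard + (Ablue G F B s).ncard := by omega

lemma Ablue_le {V : Type*} [Fintype V] {G : SimpleGraph V} {B : Set V} {F : Set (V × V)}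
    (hfst : ∀ v w1 w2, (v, w1) ∈ F → (v, w2) ∈ F → w1 = w2) (s : ℕ) :
    (Ablue G F B s).ncard ≤ B.ncard := by
  induction s with
  | zero =>
      have : Ablue G F B 0 = B :=
        Set.ext fun v => ⟨fun hv => hv.1, fun hv => ⟨hv, fun w' _ hw' => hw'⟩⟩
      rw [this]
  | succ s ih => exact le_trans (key_step hfst s).1 ih

lemma zfBlueAt_card_le {V : Type*} [Fintype V] {G : SimpleGraph V} {B : Set V}
    {F : Set (V × V)}
    (hfst : ∀ v w1 w2, (v, w1) ∈ F → (v, w2) ∈ F → w1 = w2) (s : ℕ) :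
    (zfBlueAt G F B s).ncard ≤ B.ncard * (s + 1) := by
  induction s with
  | zero =>
      show B.ncard ≤ B.ncard * (0 + 1)
      omega
  | succ s ih =>
      have h1 := (key_step (G := G) (B := B) hfst s).2
      have h2 := Ablue_le (B := B) (G := G) (F := F) hfst s
      have : (zfBlueAt G F B (s + 1)).ncard ≤ B.ncard * (s + 1) + B.ncard := by omega
      calc (zfBlueAt G F B (s + 1)).ncard ≤ B.ncard * (s + 1) + B.ncard := this
        _ = B.ncard * (s + 1 + 1) := by ring

/-- if `th_⌊Z⌋(G) ≤ t` then the order `n` of `G` satisfies `n ≤ (t+1)²/4`. -/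
theorem stmt14 {V : Type*} [Fintype V] (G : SimpleGraph V) (t : ℕ) (ht : 0 < t)
    (h : thZFgraph G ≤ (t : ℕ∞)) :
    (Fintype.card V : ℝ) ≤ ((t : ℝ) + 1) ^ 2 / 4 := by
  classical
  -- extract an optimal B
  have hS : {n : ℕ∞ | ∃ B : Set V, n = thZF G B}.Nonempty := ⟨thZF G ∅, ∅, rfl⟩
  obtain ⟨B, hB⟩ := csInf_mem hS
  have hBt : thZF G B ≤ (t : ℕ∞) := by
    rw [← hB]; exact h
  have hpt : ptZF G B ≤ (t : ℕ∞) := by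
    rw [thZF] at hBt
    exact le_trans le_add_self hBt
  -- extract an optimal set of forces F
  have hne2 : {n : ℕ∞ | ∃ F : Set (V × V), IsZFForceSet G B F ∧ n = ptZFofF G F B}.Nonempty := by
    by_contra h'
    rw [Set.not_nonempty_iff_eq_empty] at h'
    rw [ptZF, h', sInf_empty] at hpt
    exact (ENat.coe_lt_top t).not_ge hpt
  obtain ⟨F, hF, hFeq⟩ := csInf_mem hne2
  have hptF : ptZFofF G F B ≤ (t : ℕ∞) := by
    rw [← hFeq]; exact hpt
  -- extract an optimal propagation time p
  have hne3 : {n : ℕ∞ | ∃ s : ℕ, n = s ∧ zfBlueAt G F B s = Set.univ}.Nonempty := by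
    by_contra h'
    rw [Set.not_nonempty_iff_eq_empty] at h'
    rw [ptZFofF, h', sInf_empty] at hptF
    exact (ENat.coe_lt_top t).not_ge hptF
  obtain ⟨p, hp, huniv⟩ := csInf_mem hne3
  -- arithmetic in ℕ∞ : B.ncard + p ≤ t
  have hkt : B.ncard + p ≤ t := by
    have h1 : (B.ncard : ℕ∞) + (p : ℕ∞) ≤ (t : ℕ∞) := by
      have hptp : ptZF G B = (p : ℕ∞) := hFeq.trans hp
      calc (B.ncard : ℕ∞) + (p : ℕ∞) = thZF G B := by rw [thZF, hptp]
        _ ≤ (t : ℕ∞) := hBt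
    exact_mod_cast (by exact_mod_cast h1 : ((B.ncard + p : ℕ) : ℕ∞) ≤ (t : ℕ∞))
  -- counting bound
  have hfst := zf_fst_inj hF
  have hcard : Fintype.card V ≤ B.ncard * (p + 1) := by
    have := zfBlueAt_card_le (B := B) (G := G) (F := F) hfst p
    rw [huniv, Set.ncard_univ, Nat.card_eq_fintype_card] at this
    exact this
  -- real arithmetic
  set k := B.ncard with hk
  have h1 : (Fintype.card V : ℝ) ≤ (k : ℝ) * ((p : ℝ) + 1) := by
    calc (Fintype.card V : ℝ) ≤ ((k * (p + 1) : ℕ) : ℝ) := by exact_mod_cast hcard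
      _ = (k : ℝ) * ((p : ℝ) + 1) := by push_cast; ring
  have h2 : (k : ℝ) + (p : ℝ) ≤ (t : ℝ) := by exact_mod_cast hkt
  nlinarith [sq_nonneg ((k : ℝ) - (p : ℝ) - 1), Nat.cast_nonneg (α := ℝ) k,
    Nat.cast_nonneg (α := ℝ) p]

end ZFT
end

section
/- For a finite simple graph G, th_⌊Z⌋(G) = 2 if and only if G is isomorphic to K_2 or to 2K_1 (two isolated vertices). -/
open SimpleGraph

namespace ZFT

variable {V : Type*} {α : Type*} {β : Type*}

/-! ### Auxiliary lemmas for stmt15 -/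

lemma zf_firsts_not_forced {G : SimpleGraph V} :
    ∀ (L : List (V × V)) (B fr : Set V), zfValidList G B fr L → ∀ p ∈ L, p.1 ∉ fr := by
  intro L
  induction L with
  | nil => intro B fr _ p hp; simp at hp
  | cons q L ih =>
    intro B fr hv p hp
    obtain ⟨h1, h2⟩ := hv
    rcases List.mem_cons.mp hp with hp | hp
    · exact hp ▸ h1.2.2.1
    · intro hmem
      exact ih _ _ h2 p hp (Set.mem_insert_of_mem _ hmem)

lemma zf_func {G : SimpleGraph V} :
    ∀ (L : List (V × V)) (B fr : Set V), zfValidList G B fr L →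
      ∀ u w w', (u, w) ∈ L → (u, w') ∈ L → w = w' := by
  intro L
  induction L with
  | nil => intro B fr _ u w w' h; simp at h
  | cons q L ih =>
    intro B fr hv u w w' h1 h2
    obtain ⟨hq, hL⟩ := hv
    rcases List.mem_cons.mp h1 with e1 | m1 <;> rcases List.mem_cons.mp h2 with e2 | m2
    · rw [← e1] at e2; exact (Prod.mk.injEq _ _ _ _ ▸ e2).2.symm
    · exfalso
      have := zf_firsts_not_forced L _ _ hL (u, w') m2
      rw [← e1] at this
      exact this (Set.mem_insert _ _)
    · exfalso
      have := zf_firsts_not_forced L _ _ hL (u, w) m1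
      rw [← e2] at this
      exact this (Set.mem_insert _ _)
    · exact ih _ _ hL u w w' m1 m2

lemma zf_pt_pos {G : SimpleGraph V} {B : Set V} (hB : B ≠ Set.univ) :
    1 ≤ ptZF G B := by
  refine le_sInf ?_
  rintro n ⟨F, _, rfl⟩
  refine le_sInf ?_
  rintro m ⟨t, rfl, ht⟩
  cases t with
  | zero => simp only [zfBlueAt] at ht; exact absurd ht hB
  | succ t => exact_mod_cast Nat.succ_le_succ t.zero_le

lemma zf_pt_empty (G : SimpleGraph V) [Nonempty V] : ptZF G (∅ : Set V) = ⊤ := by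
  rw [eq_top_iff]
  refine le_sInf ?_
  rintro n ⟨F, ⟨L, hL, _, rfl⟩, rfl⟩
  have hLnil : L = [] := by
    cases L with
    | nil => rfl
    | cons p L => exact absurd hL.1.1 (Set.notMem_empty _)
  subst hLnil
  have hF : {p : V × V | p ∈ ([] : List (V × V))} = (∅ : Set (V × V)) := by
    ext p; simp
  rw [hF]
  have hb : ∀ t, zfBlueAt G (∅ : Set (V × V)) (∅ : Set V) t = ∅ := by
    intro t
    induction t with
    | zero => simp [zfBlueAt]
    | succ t ih => simp [zfBlueAt, ih]
  refine le_sInf ?_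
  rintro m ⟨t, rfl, ht⟩
  exact absurd (hb t ▸ ht) (Set.empty_ne_univ)

lemma zf_pt_two (G : SimpleGraph V) [Fintype V] (h3 : 3 ≤ Fintype.card V)
    {B : Set V} (hB : B.ncard = 1) : 2 ≤ ptZF G B := by
  obtain ⟨v, rfl⟩ := Set.ncard_eq_one.mp hB
  refine le_sInf ?_
  rintro n ⟨F, ⟨L, hL, _, rfl⟩, rfl⟩
  refine le_sInf ?_
  rintro m ⟨t, rfl, ht⟩
  have hcard : (Set.univ : Set V).ncard = Fintype.card V := by
    rw [Set.ncard_univ, Nat.card_eq_fintype_card]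
  match t with
  | 0 =>
    exfalso
    simp only [zfBlueAt] at ht
    have := congrArg Set.ncard ht
    rw [Set.ncard_singleton, hcard] at this
    omega
  | 1 =>
    exfalso
    have hsub : zfBlueAt G {p | p ∈ L} {v} 1 ⊆
        {v} ∪ {w | (v, w) ∈ L} := by
      intro w hw
      rcases hw with hw | hw
      · exact Or.inl hw
      · obtain ⟨v', hv'F, hv'blue, _, _, _⟩ := hw
        simp only [zfBlueAt, Set.mem_singleton_iff] at hv'blue
        subst hv'blue
        exact Or.inr hv'F
    rw [ht] at hsub
    have h2 : (Set.univ : Set V).ncard ≤ 2 := by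
      by_cases hw0 : ∃ w0, (v, w0) ∈ L
      · obtain ⟨w0, hw0⟩ := hw0
        have hsub2 : (Set.univ : Set V) ⊆ {v, w0} := by
          intro x hx
          rcases hsub hx with h | h
          · exact Or.inl h
          · exact Or.inr (zf_func L _ _ hL v x w0 h hw0 ▸ rfl)
        calc (Set.univ : Set V).ncard ≤ ({v, w0} : Set V).ncard :=
              Set.ncard_le_ncard hsub2 (Set.toFinite _)
          _ ≤ ({w0} : Set V).ncard + 1 := Set.ncard_insert_le _ _
          _ = 2 := by rw [Set.ncard_singleton]
      · push_neg at hw0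
        have hsub2 : (Set.univ : Set V) ⊆ {v} := by
          intro x hx
          rcases hsub hx with h | h
          · exact h
          · exact absurd h (hw0 x)
        calc (Set.univ : Set V).ncard ≤ ({v} : Set V).ncard :=
              Set.ncard_le_ncard hsub2 (Set.toFinite _)
          _ ≤ 2 := by rw [Set.ncard_singleton]; omega
    rw [hcard] at h2
    omega
  | (t + 2) =>
    exact_mod_cast by omega

lemma zf_forceset_univ (G : SimpleGraph V) :
    IsZFForceSet G Set.univ {p | p ∈ ([] : List (V × V))} := by
  refine ⟨[], trivial, ?_, rfl⟩
  intro u w h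
  exact h.2.1 (Set.mem_union_left _ (Set.mem_univ w))

lemma zf_ptZF_univ (G : SimpleGraph V) : ptZF G (Set.univ : Set V) = 0 := by
  refine le_antisymm ?_ zero_le
  calc ptZF G Set.univ
      ≤ ptZFofF G {p | p ∈ ([] : List (V × V))} Set.univ :=
        sInf_le ⟨_, zf_forceset_univ G, rfl⟩
    _ ≤ 0 := sInf_le ⟨0, by simp, by simp [zfBlueAt]⟩

lemma zf_upper (G : SimpleGraph V) [Fintype V] :
    thZFgraph G ≤ (Fintype.card V : ℕ∞) := by
  refine sInf_le ⟨Set.univ, ?_⟩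
  rw [thZF, zf_ptZF_univ, add_zero, Set.ncard_univ, Nat.card_eq_fintype_card]

lemma zf_lower2 (G : SimpleGraph V) [Fintype V] (h : 2 ≤ Fintype.card V) :
    2 ≤ thZFgraph G := by
  have hne : Nonempty V := Fintype.card_pos_iff.mp (by omega)
  refine le_sInf ?_
  rintro n ⟨B, rfl⟩
  rw [thZF]
  by_cases h0 : B.ncard = 0
  · rw [(Set.ncard_eq_zero (Set.toFinite B)).mp h0, zf_pt_empty G]
    simp
  by_cases h1 : B.ncard = 1
  · have hBne : B ≠ Set.univ := by
      intro hB
      rw [hB, Set.ncard_univ, Nat.card_eq_fintype_card] at h1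
      omega
    calc (2 : ℕ∞) = 1 + 1 := by norm_num
      _ ≤ (B.ncard : ℕ∞) + ptZF G B :=
          add_le_add (by exact_mod_cast h1.symm.le) (zf_pt_pos hBne)
  · have h2 : 2 ≤ B.ncard := by omega
    calc (2 : ℕ∞) ≤ (B.ncard : ℕ∞) := by exact_mod_cast h2
      _ ≤ (B.ncard : ℕ∞) + ptZF G B := le_self_add

lemma zf_lower3 (G : SimpleGraph V) [Fintype V] (h : 3 ≤ Fintype.card V) :
    3 ≤ thZFgraph G := by
  have hne : Nonempty V := Fintype.card_pos_iff.mp (by omega)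
  refine le_sInf ?_
  rintro n ⟨B, rfl⟩
  rw [thZF]
  by_cases h0 : B.ncard = 0
  · rw [(Set.ncard_eq_zero (Set.toFinite B)).mp h0, zf_pt_empty G]
    simp
  by_cases h1 : B.ncard = 1
  · calc (3 : ℕ∞) = 1 + 2 := by norm_num
      _ ≤ (B.ncard : ℕ∞) + ptZF G B :=
          add_le_add (by exact_mod_cast h1.symm.le) (zf_pt_two G h h1)
  by_cases hb2 : B.ncard = 2
  · have hBne : B ≠ Set.univ := by
      intro hB
      rw [hB, Set.ncard_univ, Nat.card_eq_fintype_card] at hb2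
      omega
    calc (3 : ℕ∞) = 2 + 1 := by norm_num
      _ ≤ (B.ncard : ℕ∞) + ptZF G B :=
          add_le_add (by exact_mod_cast hb2.symm.le) (zf_pt_pos hBne)
  · have h2 : 3 ≤ B.ncard := by omega
    calc (3 : ℕ∞) ≤ (B.ncard : ℕ∞) := by exact_mod_cast h2
      _ ≤ (B.ncard : ℕ∞) + ptZF G B := le_self_add

/-- `th_⌊Z⌋(G) = 2` iff `G ≅ K_2` or `G ≅ 2K_1`. -/
theorem stmt15 {V : Type*} [Fintype V] (G : SimpleGraph V) :
    thZFgraph G = 2 ↔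
      Nonempty (G ≃g (⊤ : SimpleGraph (Fin 2))) ∨
        Nonempty (G ≃g (⊥ : SimpleGraph (Fin 2))) := by
  classical
  constructor
  · intro h2
    have hub := zf_upper G
    rw [h2] at hub
    have hc2 : 2 ≤ Fintype.card V := by exact_mod_cast hub
    have hc3 : ¬ 3 ≤ Fintype.card V := by
      intro h3
      have := zf_lower3 G h3
      rw [h2] at this
      exact absurd this (by exact_mod_cast by omega)
    have hcard : Fintype.card V = 2 := by omega
    have e : V ≃ Fin 2 := Fintype.equivFinOfCardEq hcard
    by_cases hE : ∃ a b, G.Adj a b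
    · left
      obtain ⟨a, b, hab⟩ := hE
      have hne : a ≠ b := G.ne_of_adj hab
      have hall : ∀ z : V, z = a ∨ z = b := by
        intro z
        by_contra hz
        push_neg at hz
        have h3 : ({z, a, b} : Finset V).card = 3 := by
          rw [Finset.card_insert_of_notMem (by simp [hz.1, hz.2]),
            Finset.card_insert_of_notMem (by simp [hne]), Finset.card_singleton]
        have := Finset.card_le_univ ({z, a, b} : Finset V)
        rw [h3] at this
        omega
      have hadj : ∀ x y : V, G.Adj x y ↔ x ≠ y := by
        intro x y
        refine ⟨fun h => h.ne, fun hxy => ?_⟩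
        rcases hall x with rfl | rfl <;> rcases hall y with rfl | rfl
        · exact absurd rfl hxy
        · exact hab
        · exact hab.symm
        · exact absurd rfl hxy
      exact ⟨⟨e, by
        intro x y
        simp only [top_adj, ne_eq, EmbeddingLike.apply_eq_iff_eq, hadj]⟩⟩
    · right
      push_neg at hE
      exact ⟨⟨e, by
        intro x y
        simp only [bot_adj, false_iff]
        exact hE x y⟩⟩
  · intro h
    have hcard : Fintype.card V = 2 := by
      rcases h with he | he <;> obtain ⟨e⟩ := he <;>
        rw [Fintype.card_congr e.toEquiv, Fintype.card_fin]
    refine le_antisymm ?_ (zf_lower2 G (by omega))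
    have := zf_upper G
    rwa [hcard] at this

end ZFT
end

section
/- If G is a finite simple graph of order n with independence number α(G), then th_⌊Z⌋(G) ≤ n − α(G) + ⌈2√(α(G)) − 1⌉. -/
open SimpleGraph

namespace ZFT

variable {V : Type*} {α : Type*} {β : Type*}

/-! ### Auxiliary machinery for Statement 17 -/

section Stmt17Aux

variable {V : Type*}

lemma thZFgraph_le_thZF (G : SimpleGraph V) (B : Set V) : thZFgraph G ≤ thZF G B :=
  sInf_le ⟨B, rfl⟩

lemma ptZF_le_of_time (G : SimpleGraph V) (B : Set V) (F : Set (V × V))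
    (hF : IsZFForceSet G B F) (t : ℕ) (h : zfBlueAt G F B t = Set.univ) :
    ptZF G B ≤ (t : ℕ∞) :=
  le_trans (sInf_le ⟨F, hF, rfl⟩) (sInf_le ⟨t, rfl, h⟩)

/-- Blue set at "index time" `c` in the hopping construction. -/
def hopBlue (S : Set V) (sN : ℕ → V) (A c : ℕ) : Set V :=
  Sᶜ ∪ sN '' {i | i < c ∧ i < A}

/-- The `i`-th hop force. -/
def hopForce (sN : ℕ → V) (k i : ℕ) : V × V := (sN i, sN (i + k))

/-- The chronological list of hop forces. -/
def hopList (sN : ℕ → V) (A k : ℕ) : List (V × V) :=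
  (List.range (A - k)).map (hopForce sN k)

section HopLemmas

variable {V : Type*} {G : SimpleGraph V} {S : Set V} {sN : ℕ → V} {A k : ℕ}

lemma mem_hopList (p : V × V) :
    p ∈ hopList sN A k ↔ ∃ i, i < A - k ∧ hopForce sN k i = p := by
  simp [hopList, List.mem_map, List.mem_range]

lemma hop_nbr (hS : ∀ a ∈ S, ∀ b ∈ S, a ≠ b → ¬ G.Adj a b) :
    ∀ u, u ∈ S → ∀ x, G.Adj u x → x ∈ Sᶜ := by
  intro u hu x hadj hxS
  exact hS u hu x hxS (by rintro rfl; exact G.loopless.irrefl u hadj) hadj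

lemma insert_image (hsNinj : ∀ i j, i < A → j < A → sN i = sN j → i = j)
    (c : ℕ) (hc : c < A) :
    insert (sN c) (sN '' {i | i < c ∧ i < A}) = sN '' {i | i < c + 1 ∧ i < A} := by
  ext x
  simp only [Set.mem_insert_iff, Set.mem_image, Set.mem_setOf_eq]
  constructor
  · rintro (rfl | ⟨i, ⟨h1, h2⟩, rfl⟩)
    · exact ⟨c, ⟨Nat.lt_succ_self c, hc⟩, rfl⟩
    · exact ⟨i, ⟨by omega, h2⟩, rfl⟩
  · rintro ⟨i, ⟨h1, h2⟩, rfl⟩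
    by_cases hic : i = c
    · subst hic; exact Or.inl rfl
    · exact Or.inr ⟨i, ⟨by omega, h2⟩, rfl⟩

lemma hop_valid_aux (hS : ∀ a ∈ S, ∀ b ∈ S, a ≠ b → ¬ G.Adj a b)
    (hsNS : ∀ i, sN i ∈ S)
    (hsNinj : ∀ i j, i < A → j < A → sN i = sN j → i = j)
    (hk : 1 ≤ k) (hkA : k ≤ A) :
    ∀ len a, a + len ≤ A - k →
    zfValidList G (hopBlue S sN A (a + k)) (sN '' {i | i < a ∧ i < A})
      (List.map (hopForce sN k) (List.range' a len)) := by
  intro len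
  induction len with
  | zero => intro a _; simp only [List.range'_zero, List.map_nil]; trivial
  | succ n ih =>
    intro a ha
    have haA : a < A := by omega
    have hakA : a + k < A := by omega
    rw [List.range'_succ, List.map_cons]
    refine ⟨⟨?_, ?_, ?_, Or.inr ?_⟩, ?_⟩
    · exact Or.inr ⟨a, ⟨by omega, haA⟩, rfl⟩
    · rintro (h | ⟨i, ⟨h1, h2⟩, hei⟩)
      · exact h (hsNS (a + k))
      · exact absurd (hsNinj i (a + k) h2 hakA hei) (by omega)
    · rintro ⟨i, ⟨h1, h2⟩, hei⟩
      exact absurd (hsNinj i a h2 haA hei) (by omega)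
    · intro x hadj
      exact Or.inl (hop_nbr hS (sN a) (hsNS a) x hadj)
    · have hsum : a + k + 1 = a + 1 + k := by omega
      have h1 : insert (hopForce sN k a).2 (hopBlue S sN A (a + k)) =
          hopBlue S sN A (a + 1 + k) := by
        show insert (sN (a + k)) (Sᶜ ∪ sN '' {i | i < a + k ∧ i < A}) =
          Sᶜ ∪ sN '' {i | i < a + 1 + k ∧ i < A}
        rw [← Set.union_insert, insert_image hsNinj (a + k) hakA, hsum]
      have h2 : insert (hopForce sN k a).1 (sN '' {i | i < a ∧ i < A}) =
          sN '' {i | i < a + 1 ∧ i < A} :=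
        insert_image hsNinj a haA
      rw [h1, h2]
      exact ih (a + 1) (by omega)

lemma hop_valid (hS : ∀ a ∈ S, ∀ b ∈ S, a ≠ b → ¬ G.Adj a b)
    (hsNS : ∀ i, sN i ∈ S)
    (hsNinj : ∀ i j, i < A → j < A → sN i = sN j → i = j)
    (hk : 1 ≤ k) (hkA : k ≤ A) :
    zfValidList G (hopBlue S sN A k) ∅ (hopList sN A k) := by
  have h := hop_valid_aux hS hsNS hsNinj hk hkA (A - k) 0 (by omega)
  have hempty : {i : ℕ | i < 0 ∧ i < A} = ∅ := by ext i; simp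
  rw [hopList, List.range_eq_range']
  simpa [hempty] using h

lemma hop_endBlue (hsNsurj : ∀ x ∈ S, ∃ j, j < A ∧ sN j = x) (hk : 1 ≤ k) (hkA : k ≤ A) :
    endBlue (hopBlue S sN A k) (hopList sN A k) = Set.univ := by
  ext x
  simp only [endBlue, Set.mem_union, Set.mem_univ, iff_true, Set.mem_setOf_eq]
  by_cases hx : x ∈ S
  · obtain ⟨j, hj, rfl⟩ := hsNsurj x hx
    by_cases hjk : j < k
    · exact Or.inl (Or.inr ⟨j, ⟨hjk, hj⟩, rfl⟩)
    · refine Or.inr ⟨sN (j - k), ?_⟩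
      rw [mem_hopList]
      refine ⟨j - k, by omega, ?_⟩
      show (sN (j - k), sN (j - k + k)) = _
      rw [Nat.sub_add_cancel (by omega)]
  · exact Or.inl (Or.inl hx)

lemma hop_blueAt (hS : ∀ a ∈ S, ∀ b ∈ S, a ≠ b → ¬ G.Adj a b)
    (hsNS : ∀ i, sN i ∈ S)
    (hsNinj : ∀ i j, i < A → j < A → sN i = sN j → i = j)
    (hk : 1 ≤ k) (hkA : k ≤ A) :
    ∀ t, zfBlueAt G {p | p ∈ hopList sN A k} (hopBlue S sN A k) t
      = hopBlue S sN A (k * (t + 1)) := by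
  intro t
  induction t with
  | zero => have h : k * (0 + 1) = k := by ring
            rw [h]; rfl
  | succ t ih =>
    have hM : k * (t + 1 + 1) = k * (t + 1) + k := by ring
    have hkM : k ≤ k * (t + 1) := Nat.le_mul_of_pos_right k (by omega)
    show zfBlueAt G {p | p ∈ hopList sN A k} (hopBlue S sN A k) t ∪ _ = _
    rw [ih, hM]
    have hwhite : ∀ j, j < A → ¬ (j < k * (t + 1)) →
        sN j ∉ hopBlue S sN A (k * (t + 1)) := by
      rintro j hjA hjM (h | ⟨i, ⟨hi1, hi2⟩, hei⟩)
      · exact h (hsNS j)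
      · exact hjM (hsNinj i j hi2 hjA hei ▸ hi1)
    ext x
    simp only [Set.mem_union, Set.mem_setOf_eq]
    constructor
    · rintro (hx | ⟨v, hvF, hvblue, hwwhite, hnf, hcond⟩)
      · rcases hx with hx | ⟨i, ⟨h1, h2⟩, rfl⟩
        · exact Or.inl hx
        · exact Or.inr ⟨i, ⟨by omega, h2⟩, rfl⟩
      · obtain ⟨i, hi, hforce⟩ := (mem_hopList (v, x)).mp hvF
        have hv : sN i = v := congrArg Prod.fst hforce
        have hx2 : sN (i + k) = x := congrArg Prod.snd hforce
        rcases hvblue with hv1 | ⟨i', ⟨hi'1, hi'2⟩, hvi'⟩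
        · exact absurd (hv ▸ hsNS i) hv1
        · have heq : i' = i := hsNinj i' i hi'2 (by omega) (hvi'.trans hv.symm)
          rw [heq] at hi'1
          exact Or.inr ⟨i + k, ⟨by omega, by omega⟩, hx2⟩
    · rintro (hx | ⟨j, ⟨hj1, hj2⟩, rfl⟩)
      · exact Or.inl (Or.inl hx)
      · by_cases hjM : j < k * (t + 1)
        · exact Or.inl (Or.inr ⟨j, ⟨hjM, hj2⟩, rfl⟩)
        · have hjk : k ≤ j := le_trans hkM (by omega)
          have hmemF : (sN (j - k), sN j) ∈ hopList sN A k := by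
            rw [mem_hopList]
            refine ⟨j - k, by omega, ?_⟩
            show (sN (j - k), sN (j - k + k)) = _
            rw [Nat.sub_add_cancel hjk]
          have hw : sN j ∉ hopBlue S sN A (k * (t + 1)) := hwhite j hj2 hjM
          refine Or.inr ⟨sN (j - k), hmemF, ?_, hw, ?_, Or.inr ?_⟩
          · exact Or.inr ⟨j - k, ⟨by omega, by omega⟩, rfl⟩
          · intro w' hw'F hw'b
            obtain ⟨i', hi', hf⟩ := (mem_hopList (sN (j - k), w')).mp hw'F
            have h1 : sN i' = sN (j - k) := congrArg Prod.fst hf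
            have h2 : sN (i' + k) = w' := congrArg Prod.snd hf
            have heq : i' = j - k := hsNinj i' (j - k) (by omega) (by omega) h1
            rw [heq] at h2
            rw [← h2, Nat.sub_add_cancel hjk] at hw'b
            exact absurd hw'b hw
          · intro x' hadj
            exact Or.inl (hop_nbr hS (sN (j - k)) (hsNS (j - k)) x' hadj)

lemma hop_univ (hS : ∀ a ∈ S, ∀ b ∈ S, a ≠ b → ¬ G.Adj a b)
    (hsNS : ∀ i, sN i ∈ S)
    (hsNinj : ∀ i j, i < A → j < A → sN i = sN j → i = j)
    (hsNsurj : ∀ x ∈ S, ∃ j, j < A ∧ sN j = x)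
    (hk : 1 ≤ k) (hkA : k ≤ A) (T : ℕ) (hT : A ≤ k * (T + 1)) :
    zfBlueAt G {p | p ∈ hopList sN A k} (hopBlue S sN A k) T = Set.univ := by
  rw [hop_blueAt hS hsNS hsNinj hk hkA]
  ext x
  simp only [Set.mem_univ, iff_true]
  by_cases hx : x ∈ S
  · obtain ⟨j, hj, rfl⟩ := hsNsurj x hx
    exact Or.inr ⟨j, ⟨by omega, hj⟩, rfl⟩
  · exact Or.inl hx

lemma hop_ncard [Fintype V] (hsNS : ∀ i, sN i ∈ S)
    (hsNinj : ∀ i j, i < A → j < A → sN i = sN j → i = j)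
    (hkA : k ≤ A) (hcard : S.ncard = A) :
    (hopBlue S sN A k).ncard = Fintype.card V - A + k := by
  have hset : {i : ℕ | i < k ∧ i < A} = ↑(Finset.range k) := by
    ext i; simp only [Set.mem_setOf_eq, Finset.coe_range, Set.mem_Iio]; omega
  have himg : (sN '' {i | i < k ∧ i < A}).ncard = k := by
    rw [Set.ncard_image_of_injOn, hset, Set.ncard_coe_finset, Finset.card_range]
    intro i hi j hj hij
    exact hsNinj i j hi.2 hj.2 hij
  have hdisj : Disjoint Sᶜ (sN '' {i | i < k ∧ i < A}) := by
    rw [Set.disjoint_left]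
    rintro a ha ⟨i, _, rfl⟩
    exact ha (hsNS i)
  have hcompl : Sᶜ.ncard = Fintype.card V - A := by
    have h := Set.ncard_add_ncard_compl S (Set.toFinite S)
    rw [hcard, Nat.card_eq_fintype_card] at h
    have : A ≤ Fintype.card V := by omega
    omega
  rw [show hopBlue S sN A k = Sᶜ ∪ sN '' {i | i < k ∧ i < A} from rfl,
    Set.ncard_union_eq hdisj (Set.toFinite _) (Set.toFinite _), hcompl, himg]

lemma hop_key [Fintype V] (hS : ∀ a ∈ S, ∀ b ∈ S, a ≠ b → ¬ G.Adj a b)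
    (hsNS : ∀ i, sN i ∈ S)
    (hsNinj : ∀ i j, i < A → j < A → sN i = sN j → i = j)
    (hsNsurj : ∀ x ∈ S, ∃ j, j < A ∧ sN j = x)
    (hk : 1 ≤ k) (hkA : k ≤ A) (hcard : S.ncard = A) (T : ℕ) (hT : A ≤ k * (T + 1)) :
    thZFgraph G ≤ ((Fintype.card V - A + k : ℕ) : ℕ∞) + (T : ℕ∞) := by
  have hF : IsZFForceSet G (hopBlue S sN A k) {p | p ∈ hopList sN A k} := by
    refine ⟨hopList sN A k, hop_valid hS hsNS hsNinj hk hkA, ?_, rfl⟩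
    intro u w h
    exact h.2.1 (by rw [hop_endBlue hsNsurj hk hkA]; trivial)
  have hpt : ptZF G (hopBlue S sN A k) ≤ (T : ℕ∞) :=
    ptZF_le_of_time G _ _ hF T (hop_univ hS hsNS hsNinj hsNsurj hk hkA T hT)
  calc thZFgraph G ≤ thZF G (hopBlue S sN A k) := thZFgraph_le_thZF G _
    _ = ((hopBlue S sN A k).ncard : ℕ∞) + ptZF G (hopBlue S sN A k) := rfl
    _ ≤ ((Fintype.card V - A + k : ℕ) : ℕ∞) + (T : ℕ∞) := by
        rw [hop_ncard hsNS hsNinj hkA hcard]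
        exact add_le_add le_rfl hpt

end HopLemmas

lemma exists_enum {V : Type*} [Fintype V] (S : Set V) (hA : 0 < S.ncard) :
    ∃ sN : ℕ → V, (∀ i, sN i ∈ S) ∧
      (∀ i j, i < S.ncard → j < S.ncard → sN i = sN j → i = j) ∧
      ∀ x ∈ S, ∃ j, j < S.ncard ∧ sN j = x := by
  classical
  have hfin : S.Finite := S.toFinite
  have hcard : hfin.toFinset.card = S.ncard := by
    rw [Set.ncard_eq_toFinset_card S hfin]
  let e := hfin.toFinset.equivFin
  refine ⟨fun i => (e.symm ⟨i % S.ncard, lt_of_lt_of_eq (Nat.mod_lt i hA) hcard.symm⟩ : V),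
    ?_, ?_, ?_⟩
  · intro i
    exact hfin.mem_toFinset.mp (e.symm _).2
  · intro i j hi hj hij
    have h1 : (⟨i % S.ncard, lt_of_lt_of_eq (Nat.mod_lt i hA) hcard.symm⟩ :
          Fin hfin.toFinset.card) =
        ⟨j % S.ncard, lt_of_lt_of_eq (Nat.mod_lt j hA) hcard.symm⟩ :=
      e.symm.injective (Subtype.coe_injective hij)
    have h2 : i % S.ncard = j % S.ncard := congrArg Fin.val h1
    rwa [Nat.mod_eq_of_lt hi, Nat.mod_eq_of_lt hj] at h2
  · intro x hx
    have hy : x ∈ hfin.toFinset := hfin.mem_toFinset.mpr hx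
    have hlt : (e ⟨x, hy⟩).val < S.ncard := lt_of_lt_of_eq (e ⟨x, hy⟩).isLt hcard
    refine ⟨(e ⟨x, hy⟩).val, hlt, ?_⟩
    have h1 : (⟨(e ⟨x, hy⟩).val % S.ncard, lt_of_lt_of_eq (Nat.mod_lt _ hA) hcard.symm⟩ : Fin hfin.toFinset.card) = e ⟨x, hy⟩ :=
      Fin.ext (Nat.mod_eq_of_lt hlt)
    show ((e.symm _ : hfin.toFinset) : V) = x
    rw [h1, Equiv.symm_apply_apply]

lemma arith_bound (A : ℕ) (hA : 1 ≤ A) :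
    Nat.sqrt (A - 1) + 1 + (A - 1) / (Nat.sqrt (A - 1) + 1) ≤
      (⌈2 * Real.sqrt A - 1⌉).toNat := by
  obtain ⟨a, rfl⟩ : ∃ a, A = a + 1 := ⟨A - 1, by omega⟩
  simp only [Nat.add_sub_cancel]
  set m := Nat.sqrt a with hm
  set k := m + 1 with hk
  set T := a / k with hT
  have hm1 : m * m ≤ a := Nat.sqrt_le a
  have hm2 : a < (m + 1) * (m + 1) := Nat.lt_succ_sqrt a
  have hT1 : T * k ≤ a := Nat.div_mul_le_self a k
  have hsq : (k + T) * (k + T) < 4 * (a + 1) := by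
    rcases le_or_gt (a + 1) (m * m + m) with hcase | hcase
    · have hTm : T < m := by
        by_contra h
        push_neg at h
        have h2 : m * k ≤ T * k := Nat.mul_le_mul_right k h
        nlinarith
      nlinarith
    · have hTm : T < m + 1 := by
        by_contra h
        push_neg at h
        have h2 : (m + 1) * k ≤ T * k := Nat.mul_le_mul_right k h
        nlinarith
      nlinarith
  have hsqR : (((k + T) * (k + T) : ℕ) : ℝ) < ((4 * (a + 1) : ℕ) : ℝ) := by
    exact_mod_cast hsq
  have hreal : ((k + T : ℕ) : ℝ) < 2 * Real.sqrt (a + 1) := by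
    have h4 : ((k + T : ℕ) : ℝ) / 2 < Real.sqrt ((a + 1 : ℕ) : ℝ) := by
      rw [Real.lt_sqrt (by positivity)]
      push_cast at hsqR ⊢
      nlinarith
    have h5 : Real.sqrt ((a + 1 : ℕ) : ℝ) = Real.sqrt (a + 1) := by norm_num
    rw [h5] at h4
    linarith
  have hceil : ((k + T : ℕ) : ℤ) ≤ ⌈2 * Real.sqrt ((a : ℝ) + 1) - 1⌉ := by
    have h6 : ((k + T : ℕ) : ℤ) - 1 < ⌈2 * Real.sqrt ((a : ℝ) + 1) - 1⌉ := by
      rw [Int.lt_ceil]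
      push_cast at hreal ⊢
      linarith
    omega
  have h7 : Real.sqrt (((a : ℕ) + 1 : ℕ) : ℝ) = Real.sqrt ((a : ℝ) + 1) := by push_cast; ring_nf
  rw [h7]
  omega


end Stmt17Aux

/-- `th_⌊Z⌋(G) ≤ n − α(G) + ⌈2√(α(G)) − 1⌉`. -/
theorem stmt17 {V : Type*} [Fintype V] (G : SimpleGraph V) :
    thZFgraph G ≤
      ((Fintype.card V - indepNum G : ℕ) : ℕ∞) +
        ((⌈2 * Real.sqrt (indepNum G) - 1⌉).toNat : ℕ∞) := by
  classical
  set A := indepNum G with hAdef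
  have hbdd : BddAbove {k : ℕ | ∃ s : Set V,
      (∀ a ∈ s, ∀ b ∈ s, a ≠ b → ¬ G.Adj a b) ∧ s.ncard = k} := by
    refine ⟨Fintype.card V, ?_⟩
    rintro x ⟨s, _, rfl⟩
    have h := Set.ncard_le_ncard (Set.subset_univ s) (Set.toFinite _)
    rwa [Set.ncard_univ, Nat.card_eq_fintype_card] at h
  rcases Nat.eq_zero_or_pos A with hA0 | hApos
  · have hVempty : IsEmpty V := by
      by_contra h
      rw [not_isEmpty_iff] at h
      obtain ⟨v⟩ := h
      have h1 : (1 : ℕ) ∈ {k : ℕ | ∃ s : Set V,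
          (∀ a ∈ s, ∀ b ∈ s, a ≠ b → ¬ G.Adj a b) ∧ s.ncard = k} :=
        ⟨{v}, by simp, Set.ncard_singleton v⟩
      have h2 : (1 : ℕ) ≤ A := le_csSup hbdd h1
      omega
    have hF : IsZFForceSet G (∅ : Set V) {p | p ∈ ([] : List (V × V))} := by
      refine ⟨[], trivial, ?_, rfl⟩
      intro u w h
      exact (hVempty.false u).elim
    have huniv : zfBlueAt G {p | p ∈ ([] : List (V × V))} (∅ : Set V) 0 = Set.univ := by
      rw [Set.univ_eq_empty_iff.mpr hVempty]; rfl
    have hpt : ptZF G (∅ : Set V) ≤ ((0 : ℕ) : ℕ∞) := ptZF_le_of_time G _ _ hF 0 huniv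
    have hth : thZF G (∅ : Set V) ≤ 0 := by
      calc thZF G ∅ = (((∅ : Set V).ncard : ℕ) : ℕ∞) + ptZF G ∅ := rfl
        _ ≤ 0 + 0 := add_le_add (by simp) hpt
        _ = 0 := by simp
    exact le_trans (le_trans (thZFgraph_le_thZF G ∅) hth) zero_le
  · have hmem : A ∈ {k : ℕ | ∃ s : Set V,
        (∀ a ∈ s, ∀ b ∈ s, a ≠ b → ¬ G.Adj a b) ∧ s.ncard = k} :=
      Nat.sSup_mem ⟨0, ∅, by simp, by simp⟩ hbdd
    obtain ⟨S, hSind, hScard⟩ := hmem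
    set k := Nat.sqrt (A - 1) + 1 with hkdef
    set T := (A - 1) / k with hTdef
    have hk : 1 ≤ k := by omega
    have hkA : k ≤ A := by
      have h := Nat.sqrt_le_self (A - 1); omega
    have hT : A ≤ k * (T + 1) := by
      have h1 := Nat.div_add_mod (A - 1) k
      have h2 : (A - 1) % k < k := Nat.mod_lt _ (by omega)
      have h3 : k * (T + 1) = k * T + k := by ring
      have h4 : A - 1 + 1 = A := by omega
      rw [h3]
      rw [← hTdef] at h1
      linarith
    obtain ⟨sN, hsNS, hsNinj, hsNsurj⟩ := exists_enum S (by rw [hScard]; exact hApos)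
    rw [hScard] at hsNinj hsNsurj
    have hkey := hop_key (G := G) hSind hsNS hsNinj hsNsurj hk hkA hScard T hT
    have harith := arith_bound A hApos
    rw [← hkdef] at harith
    rw [← hTdef] at harith
    refine le_trans hkey ?_
    rw [← Nat.cast_add, ← Nat.cast_add]
    exact Nat.cast_le.mpr (by omega)

end ZFT
end
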